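/- arXiv:1801.07389 — 5 statements merged into one kernel-verified Lean document; each statement's English description precedes it below -/
import Mathlib

section
/- Let (t_k)_{k≥0} be a sequence of nonnegative real numbers and (β_k)_{k≥0} a non-increasing sequence of nonnegative real numbers with Σ_k β_k < +∞. If t_{k+1} ≤ (1+β_k) t_k + β_k t_{k−1} for every k ≥ 1, then the sequence (t_k)_{k≥0} is bounded. -/
/-- Lemma 2 of the paper. Let `(t k)` be a nonnegative real sequence and
`(β k)` a non-increasing nonnegative summable sequence. If
`t (k+1) ≤ (1 + β k) * t k + β k * t (k-1)` for every `k ≥ 1`, then `(t k)` is bounded. -/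
theorem pigd_stmt0
    (t β : ℕ → ℝ)
    (ht : ∀ k, 0 ≤ t k)
    (hβnonneg : ∀ k, 0 ≤ β k)
    (hβmono : ∀ k, β (k + 1) ≤ β k)
    (hβsum : Summable β)
    (hrec : ∀ k, 1 ≤ k → t (k + 1) ≤ (1 + β k) * t k + β k * t (k - 1)) :
    ∃ M : ℝ, ∀ k, t k ≤ M := by
  set m : ℕ → ℝ := fun k => max (t k) (t (k + 1)) with hm
  have hm0 : 0 ≤ m 0 := le_trans (ht 0) (le_max_left _ _)
  have hmnonneg : ∀ k, 0 ≤ m k := fun k => le_trans (ht k) (le_max_left _ _)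
  have hfac : ∀ k, (0:ℝ) ≤ 1 + 2 * β k := fun k => by nlinarith [hβnonneg k]
  have key : ∀ k, m k ≤ m 0 * ∏ j ∈ Finset.range k, (1 + 2 * β (j + 1)) := by
    intro k
    induction k with
    | zero => simp
    | succ n ih =>
      have hprodnn : (0:ℝ) ≤ ∏ j ∈ Finset.range n, (1 + 2 * β (j + 1)) :=
        Finset.prod_nonneg fun j _ => hfac (j + 1)
      have hstep : m (n + 1) ≤ (1 + 2 * β (n + 1)) * m n := by
        have h1 : t (n + 1) ≤ m n := le_max_right _ _
        have h2 : t (n + 2) ≤ (1 + β (n + 1)) * t (n + 1) + β (n + 1) * t n := by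
          have := hrec (n + 1) (by omega)
          simpa using this
        have h3 : t (n + 1 + 1) ≤ (1 + 2 * β (n + 1)) * m n := by
          have ha : t (n + 1) ≤ m n := le_max_right _ _
          have hb : t n ≤ m n := le_max_left _ _
          nlinarith [hβnonneg (n + 1), hmnonneg n]
        have h4 : t (n + 1) ≤ (1 + 2 * β (n + 1)) * m n := by
          nlinarith [hβnonneg (n + 1), hmnonneg n]
        exact max_le h4 h3
      calc m (n + 1) ≤ (1 + 2 * β (n + 1)) * m n := hstep
        _ ≤ (1 + 2 * β (n + 1)) * (m 0 * ∏ j ∈ Finset.range n, (1 + 2 * β (j + 1))) :=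
            mul_le_mul_of_nonneg_left ih (hfac (n + 1))
        _ = m 0 * ∏ j ∈ Finset.range (n + 1), (1 + 2 * β (j + 1)) := by
            rw [Finset.prod_range_succ]; ring
  have hprodbd : ∀ k, (∏ j ∈ Finset.range k, (1 + 2 * β (j + 1)))
      ≤ Real.exp (2 * ∑' j, β j) := by
    intro k
    have h1 : (∏ j ∈ Finset.range k, (1 + 2 * β (j + 1)))
        ≤ ∏ j ∈ Finset.range k, Real.exp (2 * β (j + 1)) := by
      apply Finset.prod_le_prod (fun j _ => hfac (j + 1))
      intro j _
      have := Real.add_one_le_exp (2 * β (j + 1))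
      linarith
    have h2 : (∏ j ∈ Finset.range k, Real.exp (2 * β (j + 1)))
        = Real.exp (∑ j ∈ Finset.range k, 2 * β (j + 1)) := by
      rw [← Real.exp_sum]
    have h3 : (∑ j ∈ Finset.range k, 2 * β (j + 1)) ≤ 2 * ∑' j, β j := by
      rw [← Finset.mul_sum]
      have : (∑ j ∈ Finset.range k, β (j + 1)) = ∑ j ∈ (Finset.range k).map ⟨Nat.succ, Nat.succ_injective⟩, β j := by
        rw [Finset.sum_map]; rfl
      rw [this]
      have hle : (∑ j ∈ (Finset.range k).map ⟨Nat.succ, Nat.succ_injective⟩, β j) ≤ ∑' j, β j :=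
        Summable.sum_le_tsum _ (fun i _ => hβnonneg i) hβsum
      linarith
    calc _ ≤ _ := h1
      _ = _ := h2
      _ ≤ Real.exp (2 * ∑' j, β j) := Real.exp_le_exp.mpr h3
  refine ⟨m 0 * Real.exp (2 * ∑' j, β j), fun k => ?_⟩
  have : t k ≤ m k := le_max_left _ _
  calc t k ≤ m k := this
    _ ≤ m 0 * ∏ j ∈ Finset.range k, (1 + 2 * β (j + 1)) := key k
    _ ≤ m 0 * Real.exp (2 * ∑' j, β j) :=
        mul_le_mul_of_nonneg_left (hprodbd k) hm0
end

section
/- Under the PIGD setup, for every k ≥ 0 the following descent inequality holds: [F(x^k) + (β_k/(2γ_k))‖x^k − x^{k−1}‖²] − [F(x^{k+1}) + (β_{k+1}/(2γ_{k+1}))‖x^{k+1} − x^k‖²] ≥ ((1−β_k)/γ_k − L/2)·‖x^{k+1} − x^k‖². -/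
open InnerProductSpace

local notation "⟪" a ", " b "⟫" => @inner ℝ _ _ a b

/-- Descent lemma for functions with Lipschitz gradient. -/
lemma pigd_descent {E : Type*} [NormedAddCommGroup E] [InnerProductSpace ℝ E] [CompleteSpace E]
    (f : E → ℝ) (f' : E → E) (L : ℝ) (hL : 0 ≤ L)
    (hf' : ∀ x, HasGradientAt f (f' x) x)
    (hlip : ∀ x y, ‖f' x - f' y‖ ≤ L * ‖x - y‖)
    (x y : E) : f y ≤ f x + ⟪f' x, y - x⟫ + L / 2 * ‖y - x‖ ^ 2 := by
  set d : E := y - x with hd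
  set φ : ℝ → ℝ := fun t => f (x + t • d) - t * ⟪f' x, d⟫ - L / 2 * t ^ 2 * ‖d‖ ^ 2 with hφ
  have hderiv : ∀ t : ℝ, HasDerivAt φ
      (⟪f' (x + t • d), d⟫ - ⟪f' x, d⟫ - L * t * ‖d‖ ^ 2) t := by
    intro t
    have hc : HasDerivAt (fun t : ℝ => x + t • d) d t := by
      simpa using ((hasDerivAt_id t).smul_const d).const_add x
    have h1 : HasDerivAt (fun t : ℝ => f (x + t • d)) ⟪f' (x + t • d), d⟫ t := by
      have := ((hf' (x + t • d)).hasFDerivAt.comp_hasDerivAt t hc)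
      exact this
    have h2 : HasDerivAt (fun t : ℝ => t * ⟪f' x, d⟫) ⟪f' x, d⟫ t := by
      simpa using (hasDerivAt_id t).mul_const (⟪f' x, d⟫)
    have h3 : HasDerivAt (fun t : ℝ => L / 2 * t ^ 2 * ‖d‖ ^ 2) (L * t * ‖d‖ ^ 2) t := by
      have := (((hasDerivAt_pow 2 t)).const_mul (L / 2)).mul_const (‖d‖ ^ 2)
      exact this.congr_deriv (by ring)
    exact (h1.sub h2).sub h3
  have hdiff : Differentiable ℝ φ := fun t => (hderiv t).differentiableAt
  have hnp : ∀ t ∈ interior (Set.Icc (0:ℝ) 1), deriv φ t ≤ 0 := by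
    intro t ht
    rw [interior_Icc] at ht
    rw [(hderiv t).deriv]
    have h1 : ⟪f' (x + t • d) - f' x, d⟫ ≤ ‖f' (x + t • d) - f' x‖ * ‖d‖ :=
      real_inner_le_norm _ _
    have h2 : ‖f' (x + t • d) - f' x‖ ≤ L * (t * ‖d‖) := by
      have := hlip (x + t • d) x
      simpa [norm_smul, abs_of_pos ht.1, mul_assoc] using this
    have hdn : (0:ℝ) ≤ ‖d‖ := norm_nonneg _
    have h3 : ⟪f' (x + t • d) - f' x, d⟫ = ⟪f' (x + t • d), d⟫ - ⟪f' x, d⟫ :=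
      inner_sub_left _ _ _
    nlinarith [ht.1.le]
  have hanti : AntitoneOn φ (Set.Icc (0 : ℝ) 1) :=
    antitoneOn_of_deriv_nonpos (convex_Icc 0 1) hdiff.continuous.continuousOn
      hdiff.differentiableOn hnp
  have key := hanti (Set.left_mem_Icc.2 zero_le_one) (Set.right_mem_Icc.2 zero_le_one) zero_le_one
  have e0 : φ 0 = f x := by simp [hφ]
  have e1 : φ 1 = f y - ⟪f' x, d⟫ - L / 2 * ‖d‖ ^ 2 := by
    have hxy : x + d = y := by simp [hd]
    simp [hφ, hxy]
  rw [e0, e1] at key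
  linarith

/-- First-order optimality inequality for the prox point. -/
lemma pigd_prox_ineq {E : Type*} [NormedAddCommGroup E] [InnerProductSpace ℝ E]
    (g : E → ℝ) (hgconv : ConvexOn ℝ Set.univ g)
    (γ' : ℝ) (hγ' : 0 < γ') (y u : E)
    (hmin : IsMinOn (fun z => ‖z - y‖ ^ 2 / (2 * γ') + g z) Set.univ u)
    (z : E) : 0 ≤ g z - g u + ⟪z - u, u - y⟫ / γ' := by
  set A : ℝ := g z - g u + ⟪z - u, u - y⟫ / γ' with hA
  set B : ℝ := ‖z - u‖ ^ 2 / (2 * γ') with hB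
  have hBnn : 0 ≤ B := by positivity
  have hstep : ∀ t : ℝ, 0 < t → t ≤ 1 → 0 ≤ A + t * B := by
    intro t ht0 ht1
    have hmem := hmin (Set.mem_univ (u + t • (z - u)))
    simp only [Set.mem_setOf_eq] at hmem
    have hquad : ‖u + t • (z - u) - y‖ ^ 2
        = ‖u - y‖ ^ 2 + 2 * (t * ⟪u - y, z - u⟫) + t ^ 2 * ‖z - u‖ ^ 2 := by
      have h0 : u + t • (z - u) - y = (u - y) + t • (z - u) := by abel
      rw [h0, norm_add_sq_real, real_inner_smul_right, norm_smul]
      rw [mul_pow]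
      simp [sq_abs]
    have hcvx : g (u + t • (z - u)) ≤ (1 - t) * g u + t * g z := by
      have h0 : u + t • (z - u) = (1 - t) • u + t • z := by
        rw [smul_sub, sub_smul]; module
      rw [h0]
      exact hgconv.2 (Set.mem_univ u) (Set.mem_univ z) (by linarith) ht0.le (by ring)
    have hle : ‖u - y‖ ^ 2 / (2 * γ') + g u ≤
        (‖u - y‖ ^ 2 + 2 * (t * ⟪u - y, z - u⟫) + t ^ 2 * ‖z - u‖ ^ 2) / (2 * γ')
          + ((1 - t) * g u + t * g z) := by
      calc ‖u - y‖ ^ 2 / (2 * γ') + g u ≤ ‖u + t • (z - u) - y‖ ^ 2 / (2 * γ')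
            + g (u + t • (z - u)) := hmem
        _ ≤ _ := by rw [hquad]; linarith
    have hγ2 : 0 < 2 * γ' := by linarith
    have hkey : 0 ≤ t * ⟪u - y, z - u⟫ / γ' + t ^ 2 * ‖z - u‖ ^ 2 / (2 * γ')
        + t * (g z - g u) := by
      have e : (‖u - y‖ ^ 2 + 2 * (t * ⟪u - y, z - u⟫) + t ^ 2 * ‖z - u‖ ^ 2) / (2 * γ')
          = ‖u - y‖ ^ 2 / (2 * γ') + t * ⟪u - y, z - u⟫ / γ' + t ^ 2 * ‖z - u‖ ^ 2 / (2 * γ') := by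
        field_simp
      rw [e] at hle
      nlinarith [hle]
    have hinner : ⟪z - u, u - y⟫ = ⟪u - y, z - u⟫ := real_inner_comm _ _
    have : 0 ≤ t * (A + t * B) := by
      rw [hA, hB, hinner]
      calc (0:ℝ) ≤ t * ⟪u - y, z - u⟫ / γ' + t ^ 2 * ‖z - u‖ ^ 2 / (2 * γ')
          + t * (g z - g u) := hkey
        _ = t * (g z - g u + ⟪u - y, z - u⟫ / γ' + t * (‖z - u‖ ^ 2 / (2 * γ'))) := by ring
    nlinarith [this]
  have : ∀ ε > (0:ℝ), 0 ≤ A + ε := by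
    intro ε hε
    rcases le_or_gt B 0 with hB0 | hB0
    · have := hstep 1 one_pos le_rfl
      nlinarith
    · set t := min 1 (ε / B) with ht
      have ht0 : 0 < t := lt_min one_pos (by positivity)
      have := hstep t ht0 (min_le_left _ _)
      have htB : t * B ≤ ε := by
        have : t ≤ ε / B := min_le_right _ _
        calc t * B ≤ (ε / B) * B := by nlinarith
          _ = ε := by field_simp
      linarith
  linarith [le_of_forall_pos_le_add (by simpa using fun ε hε => by linarith [this ε hε] : ∀ ε > (0:ℝ), -A ≤ 0 + ε)]

set_option maxHeartbeats 2000000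


/-- Lemma 4, descent inequality for PIGD. Under the PIGD setup, for every
`k ≥ 0`,
`[F(xᵏ) + (βₖ/(2γₖ))‖xᵏ − xᵏ⁻¹‖²] − [F(xᵏ⁺¹) + (βₖ₊₁/(2γₖ₊₁))‖xᵏ⁺¹ − xᵏ‖²]
  ≥ ((1−βₖ)/γₖ − L/2)‖xᵏ⁺¹ − xᵏ‖²`. -/
theorem pigd_stmt1
    {n : ℕ} (f g F : EuclideanSpace ℝ (Fin n) → ℝ)
    (f' : EuclideanSpace ℝ (Fin n) → EuclideanSpace ℝ (Fin n))
    (L c : ℝ) (hL : 0 < L) (hc0 : 0 < c) (hc1 : c < 1)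
    (hfconv : ConvexOn ℝ Set.univ f)
    (hgconv : ConvexOn ℝ Set.univ g)
    (hgcont : Continuous g)
    (hf' : ∀ x, HasGradientAt f (f' x) x)
    (hlip : ∀ x y, ‖f' x - f' y‖ ≤ L * ‖x - y‖)
    (hF : ∀ x, F x = f x + g x)
    (hFbdd : BddBelow (Set.range F))
    (β γ : ℕ → ℝ)
    (hβnonneg : ∀ k, 0 ≤ β k) (hβlt : ∀ k, β k < 1)
    (hβmono : ∀ k, β (k + 1) ≤ β k)
    (hγ : ∀ k, γ k = 2 * (1 - β k) * c / L)
    (prox : ℝ → EuclideanSpace ℝ (Fin n) → EuclideanSpace ℝ (Fin n))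
    (hprox : ∀ (γ' : ℝ) (y : EuclideanSpace ℝ (Fin n)), 0 < γ' →
      IsMinOn (fun z => ‖z - y‖ ^ 2 / (2 * γ') + g z) Set.univ (prox γ' y))
    (x : ℤ → EuclideanSpace ℝ (Fin n))
    (hiter : ∀ k : ℕ,
      x (k + 1) = prox (γ k) (x k - γ k • f' (x k) + β k • (x k - x ((k : ℤ) - 1)))) :
    ∀ k : ℕ,
      (F (x k) + β k / (2 * γ k) * ‖x k - x ((k : ℤ) - 1)‖ ^ 2)
        - (F (x (k + 1)) + β (k + 1) / (2 * γ (k + 1)) * ‖x (k + 1) - x k‖ ^ 2)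
      ≥ ((1 - β k) / γ k - L / 2) * ‖x (k + 1) - x k‖ ^ 2 := by
  intro k
  have hγpos : ∀ m : ℕ, 0 < γ m := by
    intro m
    rw [hγ m]
    have h1 : 0 < 1 - β m := sub_pos.2 (hβlt m)
    positivity
  set u : EuclideanSpace ℝ (Fin n) := x (k + 1) with hu
  set xk : EuclideanSpace ℝ (Fin n) := x k with hxk
  set δ : EuclideanSpace ℝ (Fin n) := xk - x ((k : ℤ) - 1) with hδ
  set y : EuclideanSpace ℝ (Fin n) := xk - γ k • f' xk + β k • δ with hy
  set d : EuclideanSpace ℝ (Fin n) := u - xk with hd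
  have hproxu : IsMinOn (fun z => ‖z - y‖ ^ 2 / (2 * γ k) + g z) Set.univ u := by
    rw [hu, hiter k]
    exact hprox _ _ (hγpos k)
  have hgi := pigd_prox_ineq g hgconv (γ k) (hγpos k) y u hproxu xk
  have hiy : u - y = d + γ k • f' xk - β k • δ := by
    rw [hy, hd]; module
  have hxku : xk - u = -d := by rw [hd]; module
  have hin : ⟪xk - u, u - y⟫ = -‖d‖ ^ 2 - γ k * ⟪d, f' xk⟫ + β k * ⟪d, δ⟫ := by
    rw [hxku, hiy, inner_neg_left, inner_sub_right, inner_add_right,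
      real_inner_smul_right, real_inner_smul_right, real_inner_self_eq_norm_sq]
    ring
  -- multiplied-by-γ form of the prox inequality
  have hg1 : γ k * g xk - γ k * g u - ‖d‖ ^ 2 - γ k * ⟪d, f' xk⟫ + β k * ⟪d, δ⟫ ≥ 0 := by
    rw [hin] at hgi
    have h0 := mul_nonneg (hγpos k).le hgi
    rw [mul_add, mul_div_cancel₀ _ (hγpos k).ne'] at h0
    nlinarith [h0]
  have hdes := pigd_descent f f' L hL.le hf' hlip xk u
  rw [← hd] at hdes
  have hsym : ⟪f' xk, d⟫ = ⟪d, f' xk⟫ := real_inner_comm _ _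
  rw [hsym] at hdes
  have hdes1 : γ k * f u ≤ γ k * f xk + γ k * ⟪d, f' xk⟫ + γ k * (L / 2) * ‖d‖ ^ 2 := by
    nlinarith [hγpos k, hdes]
  -- Cauchy–Schwarz / AM-GM
  have hcs : β k * ⟪d, δ⟫ ≤ β k * ((‖d‖ ^ 2 + ‖δ‖ ^ 2) / 2) := by
    apply mul_le_mul_of_nonneg_left _ (hβnonneg k)
    nlinarith [real_inner_le_norm d δ, norm_nonneg d, norm_nonneg δ, sq_nonneg (‖d‖ - ‖δ‖)]
  -- coefficient monotonicity
  have hcoef : β (k + 1) / (2 * γ (k + 1)) ≤ β k / (2 * γ k) := by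
    have h1a : 0 < 1 - β k := sub_pos.2 (hβlt k)
    have h1b : 0 < 1 - β (k + 1) := sub_pos.2 (hβlt (k + 1))
    have hmono := hβmono k
    have hb1 : 0 ≤ β (k + 1) := hβnonneg (k + 1)
    have key : β (k + 1) * (1 - β k) ≤ β k * (1 - β (k + 1)) := by nlinarith
    rw [div_le_div_iff₀ (mul_pos two_pos (hγpos (k+1))) (mul_pos two_pos (hγpos k)), hγ k, hγ (k + 1)]
    have eL : β (k + 1) * (2 * (2 * (1 - β k) * c / L))
        = 4 * c / L * (β (k + 1) * (1 - β k)) := by ring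
    have eR : β k * (2 * (2 * (1 - β (k + 1)) * c / L))
        = 4 * c / L * (β k * (1 - β (k + 1))) := by ring
    rw [eL, eR]
    exact mul_le_mul_of_nonneg_left key (by positivity)
  have hcoefD : γ k * (β (k + 1) / (2 * γ (k + 1))) * ‖d‖ ^ 2
      ≤ γ k * (β k / (2 * γ k)) * ‖d‖ ^ 2 := by
    apply mul_le_mul_of_nonneg_right _ (by positivity)
    exact mul_le_mul_of_nonneg_left hcoef (hγpos k).le
  have e2 : γ k * (β k / (2 * γ k)) = β k / 2 := by
    have h := (hγpos k).ne'
    field_simp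
  rw [e2] at hcoefD
  -- reduce the goal, multiplied by γ k > 0
  rw [ge_iff_le, ← mul_le_mul_iff_right₀ (hγpos k)]
  rw [hF, hF]
  have e1 : γ k * ((1 - β k) / γ k) = 1 - β k :=
    mul_div_cancel₀ _ (hγpos k).ne'
  have e3 : γ k * (β k / (2 * γ k)) = β k / 2 := e2
  nlinarith [hg1, hdes1, hcs, hcoefD, sq_nonneg ‖d‖, sq_nonneg ‖δ‖,
    mul_le_mul_of_nonneg_right (le_of_eq e1) (sq_nonneg ‖d‖),
    mul_le_mul_of_nonneg_right (le_of_eq e3) (sq_nonneg ‖δ‖), (hγpos k).le]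
end

section
/- Under the PIGD setup, assume additionally that F is coercive (F(x) → +∞ as ‖x‖ → +∞), argmin F is nonempty, and 0 < inf_k β_k ≤ β_k ≤ β_0 < 1 for all k. Then F(x^k) − min F = O(1/k), i.e., there exists C > 0 such that F(x^k) − min F ≤ C/k for all k ≥ 1. -/
open Set Filter

section pigdAux
variable {E : Type*} [NormedAddCommGroup E] [InnerProductSpace ℝ E] [CompleteSpace E]

local notation "⟪" x ", " y "⟫" => @inner ℝ _ _ x y

private lemma pigd_grad_line_deriv (f : E → ℝ) (f' : E → E)
    (hf' : ∀ z, HasGradientAt f (f' z) z) (x v : E) (t : ℝ) :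
    HasDerivAt (fun s : ℝ => f (x + s • v)) ⟪f' (x + t • v), v⟫ t := by
  have h1 : HasDerivAt (fun s : ℝ => x + s • v) v t := by
    simpa using ((hasDerivAt_id t).smul_const v).const_add x
  have h2 := (hasGradientAt_iff_hasFDerivAt.mp (hf' (x + t • v)))
  have h3 := h2.comp_hasDerivAt t h1
  simp [InnerProductSpace.toDual_apply_apply] at h3; exact h3

private lemma pigd_lipschitz_descent (f : E → ℝ) (f' : E → E) (L : ℝ) (hL : 0 < L)
    (hf' : ∀ z, HasGradientAt f (f' z) z)
    (hlip : ∀ a b, ‖f' a - f' b‖ ≤ L * ‖a - b‖) (x y : E) :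
    f y ≤ f x + ⟪f' x, y - x⟫ + L / 2 * ‖y - x‖ ^ 2 := by
  set v := y - x with hv
  have hcontf' : Continuous f' := by
    have : LipschitzWith (Real.toNNReal L) f' := by
      apply LipschitzWith.of_dist_le_mul
      intro a b
      rw [dist_eq_norm, dist_eq_norm, Real.coe_toNNReal _ hL.le]
      exact hlip a b
    exact this.continuous
  have hline : Continuous (fun t : ℝ => x + t • v) := by continuity
  have hcont : Continuous (fun t : ℝ => ⟪f' (x + t • v), v⟫) :=
    Continuous.inner (hcontf'.comp hline) continuous_const
  have hderiv : ∀ t ∈ Set.uIcc (0:ℝ) 1,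
      HasDerivAt (fun s : ℝ => f (x + s • v)) ⟪f' (x + t • v), v⟫ t :=
    fun t _ => pigd_grad_line_deriv f f' hf' x v t
  have hint : IntervalIntegrable (fun t : ℝ => ⟪f' (x + t • v), v⟫)
      MeasureTheory.volume 0 1 := hcont.intervalIntegrable 0 1
  have heq := intervalIntegral.integral_eq_sub_of_hasDerivAt hderiv hint
  have h10 : x + (1:ℝ) • v = y := by rw [one_smul, hv]; abel
  have h00 : x + (0:ℝ) • v = x := by rw [zero_smul, add_zero]
  rw [h10, h00] at heq
  have hbound : ∀ t ∈ Set.Icc (0:ℝ) 1,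
      ⟪f' (x + t • v), v⟫ ≤ ⟪f' x, v⟫ + L * ‖v‖ ^ 2 * t := by
    intro t ht
    have h1 : ⟪f' (x + t • v), v⟫ - ⟪f' x, v⟫ = ⟪f' (x + t • v) - f' x, v⟫ := by
      rw [inner_sub_left]
    have h2 : ⟪f' (x + t • v) - f' x, v⟫ ≤ ‖f' (x + t • v) - f' x‖ * ‖v‖ :=
      real_inner_le_norm _ _
    have h3 : ‖f' (x + t • v) - f' x‖ ≤ L * (t * ‖v‖) := by
      have := hlip (x + t • v) x
      simpa [norm_smul, abs_of_nonneg ht.1] using this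
    nlinarith [norm_nonneg v, mul_le_mul_of_nonneg_right h3 (norm_nonneg v)]
  have hintrhs : IntervalIntegrable (fun t : ℝ => ⟪f' x, v⟫ + L * ‖v‖ ^ 2 * t)
      MeasureTheory.volume 0 1 := by
    apply Continuous.intervalIntegrable; continuity
  have hmono := intervalIntegral.integral_mono_on (by norm_num : (0:ℝ) ≤ 1) hint hintrhs hbound
  have hrhs : (∫ t in (0:ℝ)..1, (⟪f' x, v⟫ + L * ‖v‖ ^ 2 * t)) =
      ⟪f' x, v⟫ + L / 2 * ‖v‖ ^ 2 := by
    rw [intervalIntegral.integral_add (intervalIntegrable_const)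
      (by apply Continuous.intervalIntegrable; continuity),
      intervalIntegral.integral_const, intervalIntegral.integral_const_mul, integral_id]
    norm_num; ring
  rw [hrhs] at hmono
  linarith [heq ▸ hmono]

private lemma pigd_convex_grad_ineq (f : E → ℝ) (f' : E → E)
    (hconv : ConvexOn ℝ Set.univ f)
    (hf' : ∀ z, HasGradientAt f (f' z) z) (x y : E) :
    f x + ⟪f' x, y - x⟫ ≤ f y := by
  set v := y - x with hv
  have hd : HasDerivAt (fun s : ℝ => f (x + s • v)) ⟪f' x, v⟫ 0 := by
    have := pigd_grad_line_deriv f f' hf' x v 0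
    simpa using this
  have hslope := hasDerivAt_iff_tendsto_slope.mp hd
  have h2 : Filter.Tendsto (slope (fun s : ℝ => f (x + s • v)) 0) (nhdsWithin 0 (Set.Ioi 0))
      (nhds ⟪f' x, v⟫) :=
    hslope.mono_left (nhdsWithin_mono 0 (fun t ht => ne_of_gt ht))
  have key : ⟪f' x, v⟫ ≤ f y - f x := by
    apply le_of_tendsto h2
    filter_upwards [Ioc_mem_nhdsGT_of_mem (Set.left_mem_Ico.mpr one_pos)] with t ht
    have hxt : x + t • v = (1 - t) • x + t • y := by
      rw [hv, smul_sub, sub_smul, one_smul]; abel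
    have hcv := hconv.2 (Set.mem_univ x) (Set.mem_univ y)
      (by linarith [ht.2] : (0:ℝ) ≤ 1 - t) ht.1.le (by ring)
    rw [← hxt] at hcv
    simp only [smul_eq_mul] at hcv
    have hsl : slope (fun s : ℝ => f (x + s • v)) 0 t
        = (f (x + t • v) - f x) / t := by
      rw [slope_def_field]
      simp
    rw [hsl, div_le_iff₀ ht.1]
    nlinarith [hcv]
  linarith

private lemma pigd_prox_subgrad (g : E → ℝ) (hgconv : ConvexOn ℝ Set.univ g)
    (γ : ℝ) (hγ : 0 < γ)
    (y p : E) (hmin : IsMinOn (fun z => ‖z - y‖ ^ 2 / (2 * γ) + g z) Set.univ p) (u : E) :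
    γ * (g p - g u) ≤ ⟪p - y, u - p⟫ := by
  have main : ∀ t : ℝ, t ∈ Set.Ioc (0:ℝ) 1 →
      γ * (g p - g u) ≤ ⟪p - y, u - p⟫ + t * (‖u - p‖ ^ 2 / 2) := by
    intro t ht
    have hz : p + t • (u - p) = (1 - t) • p + t • u := by
      rw [smul_sub, sub_smul, one_smul]; abel
    have key := isMinOn_iff.mp hmin (p + t • (u - p)) (Set.mem_univ _)
    have hexp : ‖p + t • (u - p) - y‖ ^ 2
        = ‖p - y‖ ^ 2 + 2 * t * ⟪p - y, u - p⟫ + t ^ 2 * ‖u - p‖ ^ 2 := by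
      have h1 : p + t • (u - p) - y = (p - y) + t • (u - p) := by abel
      rw [h1, norm_add_sq_real, real_inner_smul_right, norm_smul, Real.norm_eq_abs,
        mul_pow, sq_abs]
      ring
    have hcv := hgconv.2 (Set.mem_univ p) (Set.mem_univ u)
      (by linarith [ht.2] : (0:ℝ) ≤ 1 - t) ht.1.le (by ring)
    rw [← hz] at hcv
    simp only [smul_eq_mul] at hcv
    rw [hexp] at key
    have h2γ : (0:ℝ) < 2 * γ := by linarith
    have key2 : 2 * γ * (t * (g p - g u)) ≤ 2 * t * ⟪p - y, u - p⟫ + t ^ 2 * ‖u - p‖ ^ 2 := by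
      have e1 : (‖p - y‖ ^ 2 + 2 * t * ⟪p - y, u - p⟫ + t ^ 2 * ‖u - p‖ ^ 2) / (2 * γ)
          - ‖p - y‖ ^ 2 / (2 * γ)
          = (2 * t * ⟪p - y, u - p⟫ + t ^ 2 * ‖u - p‖ ^ 2) / (2 * γ) := by ring
      have e2 : g p - g (p + t • (u - p)) ≤
          (2 * t * ⟪p - y, u - p⟫ + t ^ 2 * ‖u - p‖ ^ 2) / (2 * γ) := by linarith
      have e3 : t * (g p - g u) ≤ g p - g (p + t • (u - p)) := by nlinarith [hcv]
      have e4 := e3.trans e2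
      calc 2 * γ * (t * (g p - g u)) ≤ 2 * γ *
            ((2 * t * ⟪p - y, u - p⟫ + t ^ 2 * ‖u - p‖ ^ 2) / (2 * γ)) :=
            mul_le_mul_of_nonneg_left e4 h2γ.le
        _ = 2 * t * ⟪p - y, u - p⟫ + t ^ 2 * ‖u - p‖ ^ 2 := by field_simp
    nlinarith [key2, ht.1]
  have hlim : Filter.Tendsto (fun t : ℝ => ⟪p - y, u - p⟫ + t * (‖u - p‖ ^ 2 / 2))
      (nhdsWithin 0 (Set.Ioi 0)) (nhds (⟪p - y, u - p⟫)) := by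
    have hc : Continuous (fun t : ℝ => ⟪p - y, u - p⟫ + t * (‖u - p‖ ^ 2 / 2)) := by
      continuity
    have := (hc.tendsto 0).mono_left (nhdsWithin_le_nhds (s := Set.Ioi (0:ℝ)))
    simpa using this
  apply ge_of_tendsto hlim
  filter_upwards [Ioc_mem_nhdsGT_of_mem (Set.left_mem_Ico.mpr one_pos)] with t ht
  exact main t ht

set_option maxHeartbeats 1000000 in
private lemma pigd_step (f g F : E → ℝ) (f' : E → E) (L c : ℝ)
    (hL : 0 < L) (hc0 : 0 < c) (hc1 : c < 1)
    (hfconv : ConvexOn ℝ Set.univ f) (hgconv : ConvexOn ℝ Set.univ g)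
    (hf' : ∀ z, HasGradientAt f (f' z) z)
    (hlip : ∀ a b, ‖f' a - f' b‖ ≤ L * ‖a - b‖)
    (hF : ∀ z, F z = f z + g z)
    (βk βk1 γk : ℝ) (hβk : 0 ≤ βk) (hβk1 : βk < 1)
    (hγk : γk = 2 * (1 - βk) * c / L)
    (a q p s : E)
    (hmin : IsMinOn (fun z => ‖z - (a - γk • f' a + βk • (a - q))‖ ^ 2 / (2 * γk) + g z)
      Set.univ p)
    (δk δk1 ε : ℝ) (hδk : δk = βk / (2 * γk)) (hδk1 : δk1 ≤ δk)
    (hε : ε = L / (2*c) - L/2) :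
    F p + (δk1 + ε) * ‖p - a‖ ^ 2 ≤ F a + δk * ‖a - q‖ ^ 2 ∧
    γk * (F p - F s) ≤ (‖a - s‖ ^ 2 - ‖p - s‖ ^ 2) / 2
      + βk / 2 * (‖a - s‖ ^ 2 - ‖q - s‖ ^ 2) + ‖a - q‖ ^ 2 + ‖p - a‖ ^ 2 := by
  have h1β : (0:ℝ) < 1 - βk := by linarith
  have hγpos : 0 < γk := by rw [hγk]; positivity
  set v := f' a with hv
  have hPA := pigd_prox_subgrad g hgconv γk hγpos _ p hmin a
  have hPS := pigd_prox_subgrad g hgconv γk hγpos _ p hmin s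
  have hexp1 : ⟪p - (a - γk • v + βk • (a - q)), a - p⟫
      = -‖p - a‖ ^ 2 - γk * ⟪v, p - a⟫ + βk * ⟪a - q, p - a⟫ := by
    rw [show p - (a - γk • v + βk • (a - q)) = (p - a) + γk • v - βk • (a - q) by abel,
      show a - p = -(p - a) by abel]
    rw [inner_neg_right, inner_sub_left, inner_add_left, real_inner_smul_left,
      real_inner_smul_left, real_inner_self_eq_norm_sq]
    ring
  have hexp2 : ⟪p - (a - γk • v + βk • (a - q)), s - p⟫
      = -⟪p - a, p - s⟫ - γk * ⟪v, p - s⟫ + βk * ⟪a - q, p - s⟫ := by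
    rw [show p - (a - γk • v + βk • (a - q)) = (p - a) + γk • v - βk • (a - q) by abel,
      show s - p = -(p - s) by abel]
    rw [inner_neg_right, inner_sub_left, inner_add_left, real_inner_smul_left,
      real_inner_smul_left]
    ring
  have hpol1 : ⟪p - a, p - s⟫ = (‖p - s‖ ^ 2 - ‖a - s‖ ^ 2 + ‖p - a‖ ^ 2) / 2 := by
    have h := norm_sub_sq_real (p - s) (p - a)
    rw [show p - s - (p - a) = a - s by abel, real_inner_comm] at h
    linarith
  have hpol2 : ⟪a - q, a - s⟫ = (‖a - s‖ ^ 2 - ‖q - s‖ ^ 2 + ‖a - q‖ ^ 2) / 2 := by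
    have h := norm_sub_sq_real (a - s) (a - q)
    rw [show a - s - (a - q) = q - s by abel, real_inner_comm] at h
    linarith
  have hsplit : ⟪a - q, p - s⟫ = ⟪a - q, a - s⟫ + ⟪a - q, p - a⟫ := by
    rw [← inner_add_right, show (a - s) + (p - a) = p - s by abel]
  have hsplitv : ⟪v, s - a⟫ = ⟪v, p - a⟫ - ⟪v, p - s⟫ := by
    rw [← inner_sub_right, show (p - a) - (p - s) = s - a by abel]
  have hdesc := pigd_lipschitz_descent f f' L hL hf' hlip a p
  have hconvx := pigd_convex_grad_ineq f f' hfconv hf' a s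
  have hyoung : ⟪a - q, p - a⟫ ≤ (‖a - q‖ ^ 2 + ‖p - a‖ ^ 2) / 2 := by
    nlinarith [real_inner_le_norm (a - q) (p - a), sq_nonneg (‖a - q‖ - ‖p - a‖)]
  have hγL : γk * L = 2 * (1 - βk) * c := by rw [hγk]; field_simp
  constructor
  · -- part 1
    have hga : γk * (g p - g a) ≤ -‖p - a‖ ^ 2 - γk * ⟪v, p - a⟫ + βk * ⟪a - q, p - a⟫ :=
      hexp1 ▸ hPA
    have hfa : γk * (f p - f a) ≤ γk * (⟪v, p - a⟫ + L / 2 * ‖p - a‖ ^ 2) :=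
      mul_le_mul_of_nonneg_left (by linarith) hγpos.le
    have hy2 : βk * ⟪a - q, p - a⟫ ≤ βk * ((‖a - q‖ ^ 2 + ‖p - a‖ ^ 2) / 2) :=
      mul_le_mul_of_nonneg_left hyoung hβk
    have e1 : γk * (F p - F a) ≤ (γk * L / 2 - 1 + βk / 2) * ‖p - a‖ ^ 2
        + βk / 2 * ‖a - q‖ ^ 2 := by
      rw [hF p, hF a]; linarith [hga, hfa, hy2]
    have hγδ : γk * δk = βk / 2 := by rw [hδk]; field_simp
    have hγε : γk * ε = 1 - βk - γk * L / 2 := by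
      rw [hε, hγk]; field_simp
    have hcoef : γk * (δk1 + ε) ≤ 1 - γk * L / 2 - βk / 2 := by
      have h6 := mul_le_mul_of_nonneg_left hδk1 hγpos.le
      linarith [hγδ, hγε, h6]
    have h5 := mul_le_mul_of_nonneg_right hcoef (sq_nonneg ‖p - a‖)
    have hγδY : γk * δk * ‖a - q‖ ^ 2 = βk / 2 * ‖a - q‖ ^ 2 := by rw [hγδ]
    have goal1 : γk * (F p + (δk1 + ε) * ‖p - a‖ ^ 2) ≤ γk * (F a + δk * ‖a - q‖ ^ 2) := by
      nlinarith [e1, h5, hγδY]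
    exact le_of_mul_le_mul_left goal1 hγpos
  · -- part 2
    have hgs : γk * (g p - g s) ≤ -⟪p - a, p - s⟫ - γk * ⟪v, p - s⟫ + βk * ⟪a - q, p - s⟫ :=
      hexp2 ▸ hPS
    have hfa : γk * (f p - f a) ≤ γk * (⟪v, p - a⟫ + L / 2 * ‖p - a‖ ^ 2) :=
      mul_le_mul_of_nonneg_left (by linarith) hγpos.le
    have hfs : γk * (f a - f s) ≤ γk * (⟪v, p - s⟫ - ⟪v, p - a⟫) :=
      mul_le_mul_of_nonneg_left (by linarith [hsplitv, hconvx]) hγpos.le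
    have hcombo : γk * (F p - F s) ≤ γk * (L / 2 * ‖p - a‖ ^ 2) - ⟪p - a, p - s⟫
        + βk * ⟪a - q, p - s⟫ := by
      rw [hF p, hF s]; linarith [hgs, hfa, hfs]
    have hβI2 : βk * ⟪a - q, p - a⟫ ≤ (‖a - q‖ ^ 2 + ‖p - a‖ ^ 2) / 2 := by
      have h7 := mul_le_mul_of_nonneg_left hyoung hβk
      linarith [mul_le_mul_of_nonneg_right hβk1.le
        (by positivity : (0:ℝ) ≤ (‖a - q‖ ^ 2 + ‖p - a‖ ^ 2) / 2)]
    have hβnd : βk * ‖a - q‖ ^ 2 ≤ ‖a - q‖ ^ 2 :=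
      mul_le_of_le_one_left (sq_nonneg _) hβk1.le
    have hcX : γk * (L / 2 * ‖p - a‖ ^ 2) ≤ ‖p - a‖ ^ 2 := by
      have hγLX : γk * L * ‖p - a‖ ^ 2 = 2 * (1 - βk) * c * ‖p - a‖ ^ 2 := by rw [hγL]
      nlinarith [hγLX, mul_nonneg (mul_nonneg hβk hc0.le) (sq_nonneg ‖p - a‖),
        mul_nonneg (by linarith : (0:ℝ) ≤ 1 - c) (sq_nonneg ‖p - a‖)]
    have hI4 : βk * ⟪a - q, p - s⟫ = βk * ⟪a - q, a - s⟫ + βk * ⟪a - q, p - a⟫ := by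
      rw [hsplit]; ring
    have hβpol : βk * ⟪a - q, a - s⟫ = βk / 2 * (‖a - s‖ ^ 2 - ‖q - s‖ ^ 2)
        + βk * ‖a - q‖ ^ 2 / 2 := by rw [hpol2]; ring
    linarith [hcombo, hpol1, hI4, hβpol, hβI2, hβnd, hcX]

end pigdAux

set_option maxHeartbeats 2000000

/-- Theorem 1, non-ergodic `O(1/k)` rate for PIGD. Under the PIGD setup,
if `F` is coercive, `argmin F` is nonempty and `0 < inf_k β_k ≤ β_k ≤ β_0 < 1`, then
`F(xᵏ) − min F ≤ C/k` for all `k ≥ 1`. -/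
theorem pigd_stmt3
    {n : ℕ} (f g F : EuclideanSpace ℝ (Fin n) → ℝ)
    (f' : EuclideanSpace ℝ (Fin n) → EuclideanSpace ℝ (Fin n))
    (L c : ℝ) (hL : 0 < L) (hc0 : 0 < c) (hc1 : c < 1)
    (hfconv : ConvexOn ℝ Set.univ f)
    (hgconv : ConvexOn ℝ Set.univ g)
    (hgcont : Continuous g)
    (hf' : ∀ x, HasGradientAt f (f' x) x)
    (hlip : ∀ x y, ‖f' x - f' y‖ ≤ L * ‖x - y‖)
    (hF : ∀ x, F x = f x + g x)
    (hFbdd : BddBelow (Set.range F))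
    (β γ : ℕ → ℝ)
    (hβnonneg : ∀ k, 0 ≤ β k)
    (hβmono : ∀ k, β (k + 1) ≤ β k)
    (hγ : ∀ k, γ k = 2 * (1 - β k) * c / L)
    (prox : ℝ → EuclideanSpace ℝ (Fin n) → EuclideanSpace ℝ (Fin n))
    (hprox : ∀ (γ' : ℝ) (y : EuclideanSpace ℝ (Fin n)), 0 < γ' →
      IsMinOn (fun z => ‖z - y‖ ^ 2 / (2 * γ') + g z) Set.univ (prox γ' y))
    (x : ℤ → EuclideanSpace ℝ (Fin n))
    (hiter : ∀ k : ℕ,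
      x (k + 1) = prox (γ k) (x k - γ k • f' (x k) + β k • (x k - x ((k : ℤ) - 1))))
    -- `argmin F` is nonempty and `F xstar = min F`
    (xstar : EuclideanSpace ℝ (Fin n)) (hxstar : ∀ y, F xstar ≤ F y)
    (hβlt : ∀ k, β k < 1)
    -- `0 < inf_k β_k` and `β_k ≤ β_0 < 1`
    (b : ℝ) (hb : 0 < b) (hβlb : ∀ k, b ≤ β k) (hβub : ∀ k, β k ≤ β 0) (hβ0 : β 0 < 1)
    -- `F` is coercive
    (hcoer : Filter.Tendsto F (Filter.comap norm Filter.atTop) Filter.atTop) :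
    ∃ C : ℝ, 0 < C ∧ ∀ k : ℕ, 1 ≤ k → F (x k) - F xstar ≤ C / k := by
  -- basic positivity facts
  have h1β : ∀ k, (0:ℝ) < 1 - β k := fun k => by linarith [hβlt k]
  have h1β0 : (0:ℝ) < 1 - β 0 := h1β 0
  have hγpos : ∀ k, 0 < γ k := fun k => by
    rw [hγ k]; exact div_pos (by nlinarith [h1β k]) hL
  have hε : (0:ℝ) < L / (2 * c) - L / 2 := by
    have he : L / (2 * c) - L / 2 = L * (1 - c) / (2 * c) := by field_simp
    rw [he]
    exact div_pos (mul_pos hL (by linarith)) (by linarith)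
  set ε : ℝ := L / (2 * c) - L / 2 with hεdef
  set δ : ℕ → ℝ := fun k => β k / (2 * γ k) with hδdef
  have hδnonneg : ∀ k, 0 ≤ δ k := fun k =>
    div_nonneg (hβnonneg k) (by linarith [hγpos k])
  have hδeq : ∀ k, δ k = L * β k / (4 * (1 - β k) * c) := by
    intro k
    simp only [hδdef]
    rw [hγ k]
    have h2 : (1:ℝ) - β k ≠ 0 := (h1β k).ne'
    field_simp
    ring
  have hδmono : ∀ k, δ (k + 1) ≤ δ k := by
    intro k
    rw [hδeq, hδeq, div_le_div_iff₀ (by nlinarith [h1β (k+1)]) (by nlinarith [h1β k])]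
    nlinarith [mul_le_mul_of_nonneg_left (hβmono k) (by positivity : (0:ℝ) ≤ L * c),
      hβnonneg (k+1), hβnonneg k, hL.le, hc0.le, hβlt k, hβlt (k+1)]
  set δmax : ℝ := L * β 0 / (4 * (1 - β 0) * c) with hδmaxdef
  have hδmaxnn : 0 ≤ δmax := by
    rw [hδmaxdef]
    exact div_nonneg (mul_nonneg hL.le (hβnonneg 0)) (by nlinarith [h1β0, hc0])
  have hδmax : ∀ k, δ k ≤ δmax := by
    intro k
    rw [hδeq, hδmaxdef, div_le_div_iff₀ (by nlinarith [h1β k]) (by nlinarith [h1β0])]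
    nlinarith [mul_le_mul_of_nonneg_left (hβub k) (by positivity : (0:ℝ) ≤ L * c),
      hβnonneg k, hβnonneg 0, hL.le, hc0.le, hβlt k, hβ0]
  set γmin : ℝ := 2 * (1 - β 0) * c / L with hγmindef
  have hγminpos : 0 < γmin := by rw [hγmindef]; positivity
  have hγmin : ∀ k, γmin ≤ γ k := by
    intro k
    rw [hγmindef, hγ k, div_le_div_iff₀ hL hL]
    nlinarith [mul_le_mul_of_nonneg_left (hβub k) hc0.le, hL.le]
  -- sequences
  set X : ℕ → EuclideanSpace ℝ (Fin n) := fun k => x (k : ℤ) with hXdef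
  set Q : ℕ → EuclideanSpace ℝ (Fin n) := fun k => x ((k : ℤ) - 1) with hQdef
  have hQX : ∀ k : ℕ, Q (k + 1) = X k := by
    intro k
    simp only [hQdef, hXdef]
    congr 1
    push_cast
    ring
  have hiter' : ∀ k : ℕ, X (k + 1)
      = prox (γ k) (X k - γ k • f' (X k) + β k • (X k - Q k)) := by
    intro k
    simp only [hXdef, hQdef]
    rw [show ((k+1 : ℕ) : ℤ) = (k : ℤ) + 1 by push_cast; ring]
    exact hiter k
  set D : ℕ → EuclideanSpace ℝ (Fin n) := fun k => X k - Q k with hDdef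
  set A : ℕ → ℝ := fun k => ‖Q k - xstar‖ ^ 2 with hAdef
  set r : ℕ → ℝ := fun k => F (X k) - F xstar with hrdef
  set Ev : ℕ → ℝ := fun k => r k + δ k * ‖D k‖ ^ 2 with hEvdef
  have hrnonneg : ∀ k, 0 ≤ r k := fun k => sub_nonneg.mpr (hxstar _)
  have hAnonneg : ∀ k, 0 ≤ A k := fun k => sq_nonneg _
  -- per-step inequalities
  have step : ∀ k : ℕ,
      (F (X (k+1)) + (δ (k+1) + ε) * ‖D (k+1)‖ ^ 2 ≤ F (X k) + δ k * ‖D k‖ ^ 2) ∧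
      (γ k * (F (X (k+1)) - F xstar) ≤ (A (k+1) - A (k+2)) / 2
        + β k / 2 * (A (k+1) - A k) + ‖D k‖ ^ 2 + ‖D (k+1)‖ ^ 2) := by
    intro k
    have hmin := hprox (γ k) (X k - γ k • f' (X k) + β k • (X k - Q k)) (hγpos k)
    rw [← hiter' k] at hmin
    have hstep := pigd_step f g F f' L c hL hc0 hc1 hfconv hgconv hf' hlip hF
      (β k) (β (k+1)) (γ k) (hβnonneg k) (hβlt k) (hγ k)
      (X k) (Q k) (X (k+1)) xstar hmin
      (δ k) (δ (k+1)) ε rfl (hδmono k) hεdef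
    have hD1 : D (k+1) = X (k+1) - X k := by
      simp only [hDdef]; rw [hQX k]
    have hDk : D k = X k - Q k := rfl
    have hA1 : A (k+1) = ‖X k - xstar‖ ^ 2 := by
      simp only [hAdef]; rw [hQX k]
    have hA2 : A (k+2) = ‖X (k+1) - xstar‖ ^ 2 := by
      simp only [hAdef]; rw [hQX (k+1)]
    rw [hD1, hDk, hA1, hA2]
    exact hstep
  -- Lyapunov decrease
  have hEvmono : ∀ k, Ev (k+1) + ε * ‖D (k+1)‖ ^ 2 ≤ Ev k := by
    intro k
    have h := (step k).1
    simp only [hEvdef, hrdef]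
    linarith
  have hEvsucc : ∀ k, Ev (k+1) ≤ Ev k := by
    intro k
    have := hEvmono k
    nlinarith [sq_nonneg ‖D (k+1)‖, hε]
  have hEvanti : ∀ j m : ℕ, j ≤ m → Ev m ≤ Ev j :=
    fun j m h => antitone_nat_of_succ_le hEvsucc h
  have hEvnonneg : ∀ k, 0 ≤ Ev k := fun k =>
    add_nonneg (hrnonneg k) (mul_nonneg (hδnonneg k) (sq_nonneg _))
  -- summability of squared differences
  have hsumD : ∀ N : ℕ, ∑ k ∈ Finset.range N, ‖D (k+1)‖ ^ 2 ≤ Ev 0 / ε := by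
    intro N
    rw [le_div_iff₀ hε]
    have h1 : ∑ k ∈ Finset.range N, (ε * ‖D (k+1)‖ ^ 2)
        ≤ ∑ k ∈ Finset.range N, (Ev k - Ev (k+1)) :=
      Finset.sum_le_sum fun k _ => by linarith [hEvmono k]
    rw [Finset.sum_range_sub' Ev N] at h1
    have h2 : (∑ k ∈ Finset.range N, ‖D (k+1)‖ ^ 2) * ε
        = ∑ k ∈ Finset.range N, (ε * ‖D (k+1)‖ ^ 2) := by
      rw [Finset.sum_mul]
      exact Finset.sum_congr rfl fun k _ => by ring
    rw [h2]
    linarith [hEvnonneg N]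
  -- boundedness of the iterates from coercivity
  have hFle : ∀ k : ℕ, F (X k) ≤ Ev 0 + F xstar := by
    intro k
    have h1 := hEvanti 0 k (Nat.zero_le k)
    have h2 : r k ≤ Ev k := by
      simp only [hEvdef]
      nlinarith [mul_nonneg (hδnonneg k) (sq_nonneg ‖D k‖)]
    simp only [hrdef] at h2
    linarith
  have hco := hcoer.eventually (Filter.eventually_ge_atTop (Ev 0 + F xstar + 1))
  rw [Filter.eventually_comap] at hco
  obtain ⟨R, hR⟩ := Filter.eventually_atTop.mp hco
  have hXb : ∀ k : ℕ, ‖X k‖ < R := by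
    intro k
    by_contra hcon
    push_neg at hcon
    have := hR ‖X k‖ hcon (X k) rfl
    linarith [hFle k]
  set Amax : ℝ := (max R 0 + ‖xstar‖) ^ 2 with hAmaxdef
  have hAmaxnn : 0 ≤ Amax := by
    have : (0:ℝ) ≤ max R 0 + ‖xstar‖ := by positivity
    positivity
  have hAmax : ∀ k : ℕ, A (k+1) ≤ Amax := by
    intro k
    have hA1 : A (k+1) = ‖X k - xstar‖ ^ 2 := by
      simp only [hAdef]; rw [hQX k]
    rw [hA1, hAmaxdef]
    have h1 : ‖X k - xstar‖ ≤ max R 0 + ‖xstar‖ := by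
      calc ‖X k - xstar‖ ≤ ‖X k‖ + ‖xstar‖ := norm_sub_le _ _
        _ ≤ max R 0 + ‖xstar‖ := by
            have := hXb k
            have : ‖X k‖ ≤ max R 0 := le_trans this.le (le_max_left _ _)
            linarith
    exact pow_le_pow_left₀ (norm_nonneg _) h1 2
  -- telescoping sum bound for the inertial A-terms
  have hT2' : ∀ N : ℕ, ∑ k ∈ Finset.range N, (β k / 2 * (A (k+1) - A k))
      ≤ (β N * A N - β 0 * A 0) / 2 + (β 0 - β N) * Amax / 2 := by
    intro N
    induction N with
    | zero => simp
    | succ m ih =>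
        rw [Finset.sum_range_succ]
        have hterm : β m / 2 * (A (m+1) - A m)
            ≤ (β (m+1) * A (m+1) - β m * A m) / 2 + (β m - β (m+1)) * Amax / 2 := by
          nlinarith [mul_nonneg (sub_nonneg.mpr (hβmono m)) (sub_nonneg.mpr (hAmax m))]
        linarith
  have hT2 : ∀ N : ℕ, ∑ k ∈ Finset.range N, (β k / 2 * (A (k+1) - A k)) ≤ Amax := by
    intro N
    match N with
    | 0 => simpa using hAmaxnn
    | (m+1) =>
        have hsum := hT2' (m+1)
        have hANle : A (m+1) ≤ Amax := hAmax m
        have h1 : β (m+1) * A (m+1) ≤ β (m+1) * Amax :=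
          mul_le_mul_of_nonneg_left hANle (hβnonneg (m+1))
        have h2 : 0 ≤ β 0 * A 0 := mul_nonneg (hβnonneg 0) (hAnonneg 0)
        have h3 : β 0 ≤ 1 := (hβlt 0).le
        nlinarith [hsum, mul_le_mul_of_nonneg_right (hβub (m+1)) hAmaxnn]
  -- main summation bound
  set M1 : ℝ := A 1 / 2 + Amax + ‖D 0‖ ^ 2 + 2 * (Ev 0 / ε) with hM1def
  have hsum_main : ∀ N : ℕ, γmin * (∑ k ∈ Finset.range N, r (k+1)) ≤ M1 := by
    intro N
    have h0 : γmin * (∑ k ∈ Finset.range N, r (k+1))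
        = ∑ k ∈ Finset.range N, γmin * r (k+1) := Finset.mul_sum _ _ _
    have h1 : ∑ k ∈ Finset.range N, γmin * r (k+1)
        ≤ ∑ k ∈ Finset.range N, γ k * r (k+1) :=
      Finset.sum_le_sum fun k _ => mul_le_mul_of_nonneg_right (hγmin k) (hrnonneg (k+1))
    have h2 : ∑ k ∈ Finset.range N, γ k * r (k+1)
        ≤ ∑ k ∈ Finset.range N, ((A (k+1) - A (k+2)) / 2
          + β k / 2 * (A (k+1) - A k) + ‖D k‖ ^ 2 + ‖D (k+1)‖ ^ 2) :=
      Finset.sum_le_sum fun k _ => (step k).2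
    have h3 : ∑ k ∈ Finset.range N, ((A (k+1) - A (k+2)) / 2
          + β k / 2 * (A (k+1) - A k) + ‖D k‖ ^ 2 + ‖D (k+1)‖ ^ 2)
        = (∑ k ∈ Finset.range N, (A (k+1) - A (k+2)) / 2)
          + (∑ k ∈ Finset.range N, β k / 2 * (A (k+1) - A k))
          + (∑ k ∈ Finset.range N, ‖D k‖ ^ 2)
          + (∑ k ∈ Finset.range N, ‖D (k+1)‖ ^ 2) := by
      rw [← Finset.sum_add_distrib, ← Finset.sum_add_distrib, ← Finset.sum_add_distrib]
    have h4 : (∑ k ∈ Finset.range N, (A (k+1) - A (k+2)) / 2) ≤ A 1 / 2 := by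
      rw [← Finset.sum_div, Finset.sum_range_sub' (fun k => A (k+1)) N]
      have := hAnonneg (N+1)
      linarith
    have h5 : (∑ k ∈ Finset.range N, ‖D k‖ ^ 2) ≤ ‖D 0‖ ^ 2 + Ev 0 / ε := by
      match N with
      | 0 =>
          have h6 : 0 ≤ Ev 0 / ε := div_nonneg (hEvnonneg 0) hε.le
          simpa using by positivity
      | (m+1) =>
          rw [Finset.sum_range_succ' (fun k => ‖D k‖ ^ 2) m]
          linarith [hsumD m]
    calc γmin * (∑ k ∈ Finset.range N, r (k+1))
        = ∑ k ∈ Finset.range N, γmin * r (k+1) := h0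
      _ ≤ ∑ k ∈ Finset.range N, γ k * r (k+1) := h1
      _ ≤ ∑ k ∈ Finset.range N, ((A (k+1) - A (k+2)) / 2
          + β k / 2 * (A (k+1) - A k) + ‖D k‖ ^ 2 + ‖D (k+1)‖ ^ 2) := h2
      _ = (∑ k ∈ Finset.range N, (A (k+1) - A (k+2)) / 2)
          + (∑ k ∈ Finset.range N, β k / 2 * (A (k+1) - A k))
          + (∑ k ∈ Finset.range N, ‖D k‖ ^ 2)
          + (∑ k ∈ Finset.range N, ‖D (k+1)‖ ^ 2) := h3
      _ ≤ M1 := by rw [hM1def]; linarith [h4, hT2 N, h5, hsumD N]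
  set M2 : ℝ := M1 / γmin + δmax * (Ev 0 / ε) with hM2def
  have hEvN : ∀ N : ℕ, (N : ℝ) * Ev N ≤ M2 := by
    intro N
    have h1 : (N : ℝ) * Ev N ≤ ∑ k ∈ Finset.range N, Ev (k+1) := by
      have hmem : ∀ k ∈ Finset.range N, Ev N ≤ Ev (k+1) := fun k hk =>
        hEvanti (k+1) N (Finset.mem_range.mp hk)
      calc (N : ℝ) * Ev N = ∑ _k ∈ Finset.range N, Ev N := by
            rw [Finset.sum_const, Finset.card_range, nsmul_eq_mul]
        _ ≤ ∑ k ∈ Finset.range N, Ev (k+1) := Finset.sum_le_sum hmem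
    have h2 : ∑ k ∈ Finset.range N, Ev (k+1)
        = (∑ k ∈ Finset.range N, r (k+1))
          + ∑ k ∈ Finset.range N, δ (k+1) * ‖D (k+1)‖ ^ 2 := by
      simp only [hEvdef]
      rw [Finset.sum_add_distrib]
    have h3 : (∑ k ∈ Finset.range N, r (k+1)) ≤ M1 / γmin := by
      rw [le_div_iff₀ hγminpos]
      have := hsum_main N
      linarith [hsum_main N]
    have h4 : ∑ k ∈ Finset.range N, δ (k+1) * ‖D (k+1)‖ ^ 2 ≤ δmax * (Ev 0 / ε) := by
      have h5 : ∑ k ∈ Finset.range N, δ (k+1) * ‖D (k+1)‖ ^ 2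
          ≤ ∑ k ∈ Finset.range N, δmax * ‖D (k+1)‖ ^ 2 :=
        Finset.sum_le_sum fun k _ =>
          mul_le_mul_of_nonneg_right (hδmax (k+1)) (sq_nonneg _)
      have h6 : ∑ k ∈ Finset.range N, δmax * ‖D (k+1)‖ ^ 2
          = δmax * ∑ k ∈ Finset.range N, ‖D (k+1)‖ ^ 2 := (Finset.mul_sum _ _ _).symm
      calc ∑ k ∈ Finset.range N, δ (k+1) * ‖D (k+1)‖ ^ 2
          ≤ δmax * ∑ k ∈ Finset.range N, ‖D (k+1)‖ ^ 2 := h6 ▸ h5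
        _ ≤ δmax * (Ev 0 / ε) := mul_le_mul_of_nonneg_left (hsumD N) hδmaxnn
    calc (N : ℝ) * Ev N ≤ ∑ k ∈ Finset.range N, Ev (k+1) := h1
      _ = (∑ k ∈ Finset.range N, r (k+1))
          + ∑ k ∈ Finset.range N, δ (k+1) * ‖D (k+1)‖ ^ 2 := h2
      _ ≤ M2 := by rw [hM2def]; linarith [h3, h4]
  -- conclusion
  refine ⟨max M2 1, lt_of_lt_of_le one_pos (le_max_right _ _), ?_⟩
  intro k hk
  have hkpos : (0:ℝ) < (k : ℝ) := by exact_mod_cast hk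
  have h6 : Ev k ≤ M2 / k := by
    rw [le_div_iff₀ hkpos]
    have := hEvN k
    linarith [hEvN k, mul_comm (Ev k) (k : ℝ)]
  have h7 : r k ≤ Ev k := by
    simp only [hEvdef]
    nlinarith [mul_nonneg (hδnonneg k) (sq_nonneg ‖D k‖)]
  have h8 : M2 / (k : ℝ) ≤ max M2 1 / (k : ℝ) := by
    gcongr
    exact le_max_left _ _
  calc F (x (k : ℤ)) - F xstar = r k := rfl
    _ ≤ Ev k := h7
    _ ≤ M2 / (k : ℝ) := h6
    _ ≤ max M2 1 / (k : ℝ) := h8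
end

section
/- Under the PIGD setup, assume additionally that argmin F is nonempty and that the inertial parameters are β_k = 1/(k+1)^θ for some θ > 1. Then the sequence (x^k)_{k≥0} generated by PIGD is bounded. -/
open InnerProductSpace Set

local notation "⟪" a ", " b "⟫" => @inner ℝ _ _ a b

private theorem pigd_aux_combo {n : ℕ} (u v : EuclideanSpace ℝ (Fin n)) (t : ℝ) :
    ‖(1 - t) • u + t • v‖ ^ 2
      = (1 - t) * ‖u‖ ^ 2 + t * ‖v‖ ^ 2 - t * (1 - t) * ‖u - v‖ ^ 2 := by
  have h1 := norm_add_sq_real ((1 - t) • u) (t • v)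
  have h2 := norm_sub_sq_real u v
  rw [norm_smul, norm_smul] at h1
  rw [real_inner_smul_left, real_inner_smul_right] at h1
  rw [h1, h2, Real.norm_eq_abs, Real.norm_eq_abs]
  nlinarith [sq_abs (1 - t), sq_abs t, sq_nonneg t]

private theorem pigd_aux_prox {n : ℕ} {g : EuclideanSpace ℝ (Fin n) → ℝ}
    (hgconv : ConvexOn ℝ Set.univ g)
    {γ' : ℝ} (hγ' : 0 < γ') {w p : EuclideanSpace ℝ (Fin n)}
    (hmin : IsMinOn (fun z => ‖z - w‖ ^ 2 / (2 * γ') + g z) Set.univ p)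
    (z : EuclideanSpace ℝ (Fin n)) :
    g p + ‖p - w‖ ^ 2 / (2 * γ') + ‖z - p‖ ^ 2 / (2 * γ')
      ≤ g z + ‖z - w‖ ^ 2 / (2 * γ') := by
  have h2γ : (0:ℝ) < 2 * γ' := by linarith
  have key : ∀ t : ℝ, 0 < t → t < 1 →
      g p + ‖p - w‖ ^ 2 / (2 * γ') + (1 - t) * (‖z - p‖ ^ 2 / (2 * γ'))
        ≤ g z + ‖z - w‖ ^ 2 / (2 * γ') := by
    intro t ht0 ht1
    have hzt := hmin (mem_univ ((1 - t) • p + t • z))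
    simp only [Set.mem_setOf_eq] at hzt
    have hcomb : ‖(1 - t) • p + t • z - w‖ ^ 2
        = (1 - t) * ‖p - w‖ ^ 2 + t * ‖z - w‖ ^ 2 - t * (1 - t) * ‖z - p‖ ^ 2 := by
      have h := pigd_aux_combo (p - w) (z - w) t
      have he : (1 - t) • (p - w) + t • (z - w) = (1 - t) • p + t • z - w := by module
      have he2 : p - w - (z - w) = p - z := by module
      rw [he, he2, norm_sub_rev p z] at h
      exact h
    have hg := hgconv.2 (mem_univ p) (mem_univ z)
      (by linarith : (0:ℝ) ≤ 1 - t) ht0.le (by ring)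
    simp only [smul_eq_mul] at hg
    rw [hcomb] at hzt
    have hq : ((1 - t) * ‖p - w‖ ^ 2 + t * ‖z - w‖ ^ 2 - t * (1 - t) * ‖z - p‖ ^ 2) / (2 * γ')
        = (1 - t) * (‖p - w‖ ^ 2 / (2 * γ')) + t * (‖z - w‖ ^ 2 / (2 * γ'))
          - t * (1 - t) * (‖z - p‖ ^ 2 / (2 * γ')) := by ring
    rw [hq] at hzt
    nlinarith [hzt, hg, ht0]
  have hfinal : ∀ ε > (0:ℝ),
      g p + ‖p - w‖ ^ 2 / (2 * γ') + ‖z - p‖ ^ 2 / (2 * γ')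
        ≤ g z + ‖z - w‖ ^ 2 / (2 * γ') + ε := by
    intro ε hε
    have hC0 : 0 ≤ ‖z - p‖ ^ 2 / (2 * γ') := by positivity
    rcases eq_or_lt_of_le hC0 with hC0' | hC0'
    · have h := key (1/2) (by norm_num) (by norm_num)
      rw [← hC0'] at h ⊢
      linarith
    · set C := ‖z - p‖ ^ 2 / (2 * γ') with hC
      set t := min (1/2) (ε / C) with htdef
      have ht0 : 0 < t := lt_min (by norm_num) (div_pos hε hC0')
      have ht1 : t < 1 := lt_of_le_of_lt (min_le_left _ _) (by norm_num)
      have htC : t * C ≤ ε := by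
        calc t * C ≤ (ε / C) * C :=
              mul_le_mul_of_nonneg_right (min_le_right _ _) hC0'.le
          _ = ε := div_mul_cancel₀ ε (ne_of_gt hC0')
      have h := key t ht0 ht1
      have hexp : (1 - t) * C = C - t * C := by ring
      rw [hexp] at h
      linarith
  linarith [le_of_forall_pos_le_add hfinal]

private theorem pigd_aux_descent {n : ℕ} {f : EuclideanSpace ℝ (Fin n) → ℝ}
    {f' : EuclideanSpace ℝ (Fin n) → EuclideanSpace ℝ (Fin n)} {L : ℝ}
    (hf' : ∀ x, HasGradientAt f (f' x) x)
    (hlip : ∀ x y, ‖f' x - f' y‖ ≤ L * ‖x - y‖)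
    (a b : EuclideanSpace ℝ (Fin n)) :
    f b ≤ f a + ⟪f' a, b - a⟫ + L / 2 * ‖b - a‖ ^ 2 := by
  set v := b - a with hv
  have hline : ∀ t : ℝ, HasDerivAt (fun s : ℝ => f (a + s • v)) ⟪f' (a + t • v), v⟫ t := by
    intro t
    have h1 : HasDerivAt (fun s : ℝ => a + s • v) v t := by
      simpa using ((hasDerivAt_id t).smul_const v).const_add a
    have h2 := (hf' (a + t • v)).hasFDerivAt.comp_hasDerivAt t h1
    simp [toDual] at h2
    exact h2
  set χ : ℝ → ℝ := fun t => f (a + t • v) - f a - t * ⟪f' a, v⟫ - L / 2 * ‖v‖ ^ 2 * t ^ 2 with hχ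
  have hχd : ∀ t : ℝ, HasDerivAt χ (⟪f' (a + t • v), v⟫ - ⟪f' a, v⟫ - L * ‖v‖ ^ 2 * t) t := by
    intro t
    have h1 := ((hline t).sub_const (f a)).sub ((hasDerivAt_id t).mul_const ⟪f' a, v⟫)
    have h2 := h1.sub ((((hasDerivAt_id t).pow 2)).const_mul (L / 2 * ‖v‖ ^ 2))
    convert h2 using 1
    · rfl
    · rfl
    · rfl
    · simp [id]; ring
  have hder : ∀ t ∈ interior (Icc (0:ℝ) 1), deriv χ t ≤ 0 := by
    intro t ht
    rw [interior_Icc] at ht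
    rw [(hχd t).deriv]
    have h1 : ⟪f' (a + t • v) - f' a, v⟫ ≤ ‖f' (a + t • v) - f' a‖ * ‖v‖ :=
      real_inner_le_norm _ _
    have h2 : ‖f' (a + t • v) - f' a‖ ≤ L * (t * ‖v‖) := by
      have := hlip (a + t • v) a
      simpa [norm_smul, abs_of_pos ht.1, mul_assoc] using this
    have h3 : ⟪f' (a + t • v), v⟫ - ⟪f' a, v⟫ = ⟪f' (a + t • v) - f' a, v⟫ := by
      rw [inner_sub_left]
    nlinarith [norm_nonneg v, norm_nonneg (f' (a + t • v) - f' a), ht.1.le]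
  have hanti : AntitoneOn χ (Icc (0:ℝ) 1) := by
    apply antitoneOn_of_deriv_nonpos (convex_Icc 0 1)
    · exact fun t _ => ((hχd t).differentiableAt.continuousAt).continuousWithinAt
    · exact fun t _ => ((hχd t).differentiableAt).differentiableWithinAt
    · exact hder
  have h10 : χ 1 ≤ χ 0 := hanti (by simp) (by simp) zero_le_one
  have h0 : χ 0 = 0 := by simp [hχ]
  have h1 : χ 1 = f b - f a - ⟪f' a, v⟫ - L / 2 * ‖v‖ ^ 2 := by
    simp [hχ, hv]
  rw [h0, h1] at h10
  linarith

private theorem pigd_aux_convgrad {n : ℕ} {f : EuclideanSpace ℝ (Fin n) → ℝ}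
    {f' : EuclideanSpace ℝ (Fin n) → EuclideanSpace ℝ (Fin n)}
    (hfconv : ConvexOn ℝ Set.univ f)
    (hf' : ∀ x, HasGradientAt f (f' x) x)
    (a b : EuclideanSpace ℝ (Fin n)) :
    f a + ⟪f' a, b - a⟫ ≤ f b := by
  set v := b - a with hv
  set φ : ℝ → ℝ := fun t => f (a + t • v) with hφ
  have hd : HasDerivAt φ ⟪f' a, v⟫ 0 := by
    have h1 : HasDerivAt (fun s : ℝ => a + s • v) v 0 := by
      simpa using ((hasDerivAt_id (0:ℝ)).smul_const v).const_add a
    have h2 := (hf' (a + (0:ℝ) • v)).hasFDerivAt.comp_hasDerivAt 0 h1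
    simp [toDual] at h2
    exact h2
  have hslope : ∀ t ∈ Ioo (0:ℝ) 1, slope φ 0 t ≤ φ 1 - φ 0 := by
    intro t ht
    have hconv := hfconv.2 (mem_univ a) (mem_univ (a + v)) (by linarith [ht.2] : (0:ℝ) ≤ 1 - t)
      ht.1.le (by ring)
    have he : (1 - t) • a + t • (a + v) = a + t • v := by module
    rw [he] at hconv
    have hφt : φ t ≤ (1 - t) * φ 0 + t * φ 1 := by
      simpa [hφ, smul_smul] using hconv
    rw [slope_def_field, div_le_iff₀ (by simpa using ht.1)]
    have hφ0 : φ 0 = f a := by simp [hφ]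
    have ht0 : (t:ℝ) - 0 = t := by ring
    rw [ht0]
    nlinarith [ht.1]
  have htend : Filter.Tendsto (slope φ 0) (nhdsWithin 0 (Ioi (0:ℝ))) (nhds ⟪f' a, v⟫) := by
    refine (hasDerivAt_iff_tendsto_slope.1 hd).mono_left (nhdsWithin_mono _ ?_)
    intro t ht
    exact ne_of_gt ht
  have hle : ⟪f' a, v⟫ ≤ φ 1 - φ 0 := by
    refine le_of_tendsto htend ?_
    filter_upwards [Ioo_mem_nhdsGT_of_mem (by norm_num : (0:ℝ) ∈ Ico (0:ℝ) 1)] with t ht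
    exact hslope t ht
  have hφ0 : φ 0 = f a := by simp [hφ]
  have hφ1 : φ 1 = f b := by simp [hφ, hv]
  linarith

private theorem pigd_aux_main {n : ℕ} {f g : EuclideanSpace ℝ (Fin n) → ℝ}
    {f' : EuclideanSpace ℝ (Fin n) → EuclideanSpace ℝ (Fin n)} {L : ℝ}
    (hgconv : ConvexOn ℝ Set.univ g)
    (hd : ∀ a b, f b ≤ f a + ⟪f' a, b - a⟫ + L / 2 * ‖b - a‖ ^ 2)
    (hcg : ∀ a b, f a + ⟪f' a, b - a⟫ ≤ f b)
    {γk βk : ℝ} (hγk : 0 < γk) {p q r w : EuclideanSpace ℝ (Fin n)}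
    (hw : w = q - γk • f' q + βk • (q - r))
    (hpmin : IsMinOn (fun z => ‖z - w‖ ^ 2 / (2 * γk) + g z) Set.univ p)
    (z : EuclideanSpace ℝ (Fin n)) :
    f p + g p ≤ f z + g z + L / 2 * ‖p - q‖ ^ 2
      + (1 / γk) * ⟪p - q, z - p⟫ + (βk / γk) * ⟪q - r, p - z⟫ := by
  have hprox := pigd_aux_prox hgconv hγk hpmin z
  have hid : ‖z - p‖ ^ 2 = ‖z - w‖ ^ 2 - 2 * ⟪z - w, p - w⟫ + ‖p - w‖ ^ 2 := by
    have h := norm_sub_sq_real (z - w) (p - w)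
    have he : z - w - (p - w) = z - p := by module
    rw [he] at h
    exact h
  have hgp : g p ≤ g z + (1 / γk) * ⟪p - w, z - p⟫ := by
    have hinner : ⟪p - w, z - p⟫ = ⟪z - w, p - w⟫ - ‖p - w‖ ^ 2 := by
      have h : ⟪p - w, z - p⟫ = ⟪p - w, z - w⟫ - ⟪p - w, p - w⟫ := by
        rw [← inner_sub_right]; congr 1; module
      rw [h, real_inner_self_eq_norm_sq, real_inner_comm]
    rw [hinner]
    have hq : ∀ A : ℝ, A / (2 * γk) = (1 / γk) * (A / 2) := fun A => by
      rw [one_div_mul_eq_div, div_div]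
    rw [hid] at hprox
    rw [hq, hq, hq] at hprox
    linarith [hprox]
  have hpw : p - w = (p - q) + γk • f' q + (-βk) • (q - r) := by
    rw [hw]; module
  have hexp : ⟪p - w, z - p⟫ = ⟪p - q, z - p⟫ + γk * ⟪f' q, z - p⟫ - βk * ⟪q - r, z - p⟫ := by
    rw [hpw, inner_add_left, inner_add_left, real_inner_smul_left, real_inner_smul_left]
    ring
  have hfp : f p ≤ f z + ⟪f' q, p - z⟫ + L / 2 * ‖p - q‖ ^ 2 := by
    have h1 := hd q p
    have h2 := hcg q z
    have h3 : ⟪f' q, p - q⟫ - ⟪f' q, z - q⟫ = ⟪f' q, p - z⟫ := by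
      rw [← inner_sub_right]; congr 1; module
    linarith
  have hiz : ⟪f' q, z - p⟫ = -⟪f' q, p - z⟫ := by
    rw [← inner_neg_right]; congr 1; module
  have hqz : ⟪q - r, z - p⟫ = -⟪q - r, p - z⟫ := by
    rw [← inner_neg_right]; congr 1; module
  rw [hexp, hiz, hqz] at hgp
  have hγne : γk ≠ 0 := ne_of_gt hγk
  have hsplit : (1 / γk) * (⟪p - q, z - p⟫ + γk * (-⟪f' q, p - z⟫) - βk * (-⟪q - r, p - z⟫))
      = (1 / γk) * ⟪p - q, z - p⟫ - ⟪f' q, p - z⟫ + (βk / γk) * ⟪q - r, p - z⟫ := by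
    field_simp
    ring
  rw [hsplit] at hgp
  linarith

set_option maxHeartbeats 1000000 in
/-- Lemma 6, boundedness of PIGD iterates with diminishing inertia.
Under the PIGD setup with `argmin F` nonempty and `β_k = 1/(k+1)^θ` for some `θ > 1`,
the sequence `(xᵏ)` is bounded. -/
theorem pigd_stmt4
    {n : ℕ} (f g F : EuclideanSpace ℝ (Fin n) → ℝ)
    (f' : EuclideanSpace ℝ (Fin n) → EuclideanSpace ℝ (Fin n))
    (L c : ℝ) (hL : 0 < L) (hc0 : 0 < c) (hc1 : c < 1)
    (hfconv : ConvexOn ℝ Set.univ f)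
    (hgconv : ConvexOn ℝ Set.univ g)
    (hgcont : Continuous g)
    (hf' : ∀ x, HasGradientAt f (f' x) x)
    (hlip : ∀ x y, ‖f' x - f' y‖ ≤ L * ‖x - y‖)
    (hF : ∀ x, F x = f x + g x)
    (hFbdd : BddBelow (Set.range F))
    (β γ : ℕ → ℝ)
    (hβnonneg : ∀ k, 0 ≤ β k)
    (hβmono : ∀ k, β (k + 1) ≤ β k)
    (hγ : ∀ k, γ k = 2 * (1 - β k) * c / L)
    (prox : ℝ → EuclideanSpace ℝ (Fin n) → EuclideanSpace ℝ (Fin n))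
    (hprox : ∀ (γ' : ℝ) (y : EuclideanSpace ℝ (Fin n)), 0 < γ' →
      IsMinOn (fun z => ‖z - y‖ ^ 2 / (2 * γ') + g z) Set.univ (prox γ' y))
    (x : ℤ → EuclideanSpace ℝ (Fin n))
    (hiter : ∀ k : ℕ,
      x (k + 1) = prox (γ k) (x k - γ k • f' (x k) + β k • (x k - x ((k : ℤ) - 1))))
    -- `argmin F` is nonempty and `F xstar = min F`
    (xstar : EuclideanSpace ℝ (Fin n)) (hxstar : ∀ y, F xstar ≤ F y)
    -- inertial parameters `β_k = 1/(k+1)^θ`, `θ > 1`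
    (θ : ℝ) (hθ : 1 < θ) (hβ : ∀ k : ℕ, β k = 1 / ((k : ℝ) + 1) ^ θ) :
    ∃ M : ℝ, ∀ k : ℕ, ‖x k‖ ≤ M := by
  have hcg := pigd_aux_convgrad hfconv hf'
  have hd := pigd_aux_descent hf' hlip
  -- β k ≤ 1/(k+1)
  have hβle : ∀ k : ℕ, β k ≤ 1 / ((k : ℝ) + 1) := by
    intro k
    rw [hβ k]
    have h1 : (1:ℝ) ≤ (k:ℝ) + 1 := by
      have := Nat.cast_nonneg (α := ℝ) k; linarith
    have h2 : ((k:ℝ) + 1) ^ (1:ℝ) ≤ ((k:ℝ) + 1) ^ θ :=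
      Real.rpow_le_rpow_of_exponent_le h1 hθ.le
    rw [Real.rpow_one] at h2
    exact one_div_le_one_div_of_le (by linarith) h2
  have hβhalf : ∀ k : ℕ, 1 ≤ k → β k ≤ 1 / 2 := by
    intro k hk
    refine (hβle k).trans ?_
    have h2 : (2:ℝ) ≤ (k:ℝ) + 1 := by
      have : (1:ℝ) ≤ (k:ℝ) := by exact_mod_cast hk
      linarith
    exact one_div_le_one_div_of_le (by norm_num) h2
  have hγpos : ∀ k : ℕ, 1 ≤ k → 0 < γ k := by
    intro k hk
    rw [hγ k]
    have h1 := hβhalf k hk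
    have h2 : (0:ℝ) < 1 - β k := by linarith
    positivity
  set A := L * (1 - c) / (2 * c) with hA
  have h1c : (0:ℝ) < 1 - c := by linarith
  have hApos : 0 < A := by rw [hA]; positivity
  clear_value A
  -- main per-step inequality
  have hmain : ∀ k : ℕ, 1 ≤ k → ∀ z,
      F (x ((k:ℤ) + 1)) ≤ F z + L / 2 * ‖x ((k:ℤ) + 1) - x (k:ℤ)‖ ^ 2
        + (1 / γ k) * ⟪x ((k:ℤ) + 1) - x (k:ℤ), z - x ((k:ℤ) + 1)⟫
        + (β k / γ k) * ⟪x (k:ℤ) - x ((k:ℤ) - 1), x ((k:ℤ) + 1) - z⟫ := by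
    intro k hk z
    have hγk := hγpos k hk
    have hpmin := hprox (γ k) (x (k:ℤ) - γ k • f' (x (k:ℤ)) + β k • (x (k:ℤ) - x ((k:ℤ) - 1))) hγk
    rw [← hiter k] at hpmin
    rw [hF, hF]
    exact pigd_aux_main hgconv hd hcg hγk rfl hpmin z
  -- numeric estimates
  have hnum1 : ∀ k : ℕ, 1 ≤ k → L / 2 - 1 / γ k + β k / (2 * γ k) ≤ -A := by
    intro k hk
    have hb0 := hβnonneg k
    have hbh := hβhalf k hk
    have h1b : (0:ℝ) < 1 - β k := by linarith
    rw [hγ k, hA]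
    have hcne := ne_of_gt hc0
    have hLne := ne_of_gt hL
    have h1bne := ne_of_gt h1b
    field_simp
    nlinarith [mul_pos hc0 hL, mul_pos h1b hc0, sq_nonneg L, mul_pos (mul_pos h1b hc0) hL,
      mul_nonneg (mul_nonneg hb0 hc0.le) hL.le]
  have hnum2 : ∀ k : ℕ, 1 ≤ k → β k ≤ (1 - c) / 2 → β k / (2 * γ k) ≤ A / 2 := by
    intro k hk hbc
    have hb0 := hβnonneg k
    have hbh := hβhalf k hk
    have h1b : (0:ℝ) < 1 - β k := by linarith
    rw [hγ k, hA]
    have hcne := ne_of_gt hc0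
    have hLne := ne_of_gt hL
    have h1bne := ne_of_gt h1b
    field_simp
    ring_nf
    nlinarith [mul_nonneg (by linarith : (0:ℝ) ≤ 1 / 2 - β k) h1c.le, mul_pos hc0 hL, mul_pos h1b hc0, mul_pos (mul_pos h1b hc0) hL, sq_nonneg L,
      mul_pos hc0 (mul_pos hc0 hL)]
  have hnum3 : ∀ k : ℕ, γ k * L ≤ 2 := by
    intro k
    rw [hγ k]
    have hb0 := hβnonneg k
    have hLne := ne_of_gt hL
    have h1 : 2 * (1 - β k) * c / L * L = 2 * (1 - β k) * c := by field_simp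
    rw [h1]
    nlinarith [hβnonneg k]
  -- the Lyapunov sequence for stage 1
  set E : ℕ → ℝ := fun j => F (x (j:ℤ)) - F xstar
      + (β j / (2 * γ j)) * ‖x (j:ℤ) - x ((j:ℤ) - 1)‖ ^ 2 with hE
  set s : ℕ → ℝ := fun j => ‖x ((j:ℤ) + 1) - x (j:ℤ)‖ ^ 2 with hs
  clear_value E s
  have hsnonneg : ∀ j, 0 ≤ s j := fun j => by rw [hs]; positivity
  have hEnonneg : ∀ j : ℕ, 1 ≤ j → 0 ≤ E j := by
    intro j hj
    rw [hE]
    have h1 := hxstar (x (j:ℤ))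
    have h2 : 0 ≤ (β j / (2 * γ j)) * ‖x (j:ℤ) - x ((j:ℤ) - 1)‖ ^ 2 := by
      apply mul_nonneg
      · exact div_nonneg (hβnonneg j) (by linarith [hγpos j hj])
      · positivity
    simp only
    linarith
  -- stage 1 one-step estimate
  have hstep1 : ∀ k : ℕ, 1 ≤ k → β (k + 1) ≤ (1 - c) / 2 →
      E (k + 1) + (A / 2) * s k ≤ E k := by
    intro k hk hbk1
    have hγk := hγpos k hk
    have h := hmain k hk (x (k:ℤ))
    have hqp : ⟪x ((k:ℤ) + 1) - x (k:ℤ), x (k:ℤ) - x ((k:ℤ) + 1)⟫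
        = -‖x ((k:ℤ) + 1) - x (k:ℤ)‖ ^ 2 := by
      have he : x (k:ℤ) - x ((k:ℤ) + 1) = -(x ((k:ℤ) + 1) - x (k:ℤ)) := by module
      rw [he, inner_neg_right, real_inner_self_eq_norm_sq]
    have hCS : ⟪x (k:ℤ) - x ((k:ℤ) - 1), x ((k:ℤ) + 1) - x (k:ℤ)⟫
        ≤ (‖x (k:ℤ) - x ((k:ℤ) - 1)‖ ^ 2 + ‖x ((k:ℤ) + 1) - x (k:ℤ)‖ ^ 2) / 2 := by
      have h1 := real_inner_le_norm (x (k:ℤ) - x ((k:ℤ) - 1)) (x ((k:ℤ) + 1) - x (k:ℤ))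
      nlinarith [sq_nonneg (‖x (k:ℤ) - x ((k:ℤ) - 1)‖ - ‖x ((k:ℤ) + 1) - x (k:ℤ)‖)]
    rw [hqp] at h
    have hβγ : 0 ≤ β k / γ k := div_nonneg (hβnonneg k) hγk.le
    -- F p - F q ≤ (L/2 - 1/γ + β/(2γ)) * s k + (β/(2γ)) * ‖q - r‖²
    have h2 : F (x ((k:ℤ) + 1)) ≤ F (x (k:ℤ))
        + (L / 2 - 1 / γ k + β k / (2 * γ k)) * ‖x ((k:ℤ) + 1) - x (k:ℤ)‖ ^ 2
        + (β k / (2 * γ k)) * ‖x (k:ℤ) - x ((k:ℤ) - 1)‖ ^ 2 := by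
      have h3 : (β k / γ k) * ⟪x (k:ℤ) - x ((k:ℤ) - 1), x ((k:ℤ) + 1) - x (k:ℤ)⟫
          ≤ (β k / γ k) * ((‖x (k:ℤ) - x ((k:ℤ) - 1)‖ ^ 2 + ‖x ((k:ℤ) + 1) - x (k:ℤ)‖ ^ 2) / 2) :=
        mul_le_mul_of_nonneg_left hCS hβγ
      have h4 : (β k / γ k) * ((‖x (k:ℤ) - x ((k:ℤ) - 1)‖ ^ 2 + ‖x ((k:ℤ) + 1) - x (k:ℤ)‖ ^ 2) / 2)
          = (β k / (2 * γ k)) * ‖x (k:ℤ) - x ((k:ℤ) - 1)‖ ^ 2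
            + (β k / (2 * γ k)) * ‖x ((k:ℤ) + 1) - x (k:ℤ)‖ ^ 2 := by
        field_simp
      rw [h4] at h3
      linarith
    have h5 : (L / 2 - 1 / γ k + β k / (2 * γ k)) * ‖x ((k:ℤ) + 1) - x (k:ℤ)‖ ^ 2
        ≤ -A * ‖x ((k:ℤ) + 1) - x (k:ℤ)‖ ^ 2 :=
      mul_le_mul_of_nonneg_right (hnum1 k hk) (by positivity)
    have h6 := hnum2 (k + 1) (by omega) hbk1
    -- unfold E and s, handle casts
    have hc1' : ((k + 1 : ℕ) : ℤ) = (k:ℤ) + 1 := by push_cast; ring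
    have hc2' : ((k + 1 : ℕ) : ℤ) - 1 = (k:ℤ) := by push_cast; ring
    simp only [hE, hs, hc1', hc2', add_sub_cancel_right]
    have hsknn : (0:ℝ) ≤ ‖x ((k:ℤ) + 1) - x (k:ℤ)‖ ^ 2 := by positivity
    have h7 : (β (k+1) / (2 * γ (k+1))) * ‖x ((k:ℤ) + 1) - x (k:ℤ)‖ ^ 2
        ≤ (A / 2) * ‖x ((k:ℤ) + 1) - x (k:ℤ)‖ ^ 2 :=
      mul_le_mul_of_nonneg_right h6 hsknn
    have h8 := hxstar (x ((k:ℤ) + 1))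
    linarith
  -- the index K₁ from which β k is small
  set K₁ : ℕ := max 1 (Nat.ceil (2 / (1 - c))) with hK₁
  have hK₁1 : 1 ≤ K₁ := le_max_left _ _
  have hK₁c : (Nat.ceil (2 / (1 - c)) : ℕ) ≤ K₁ := le_max_right _ _
  clear_value K₁
  have hβsmall : ∀ j : ℕ, K₁ ≤ j → β j ≤ (1 - c) / 2 := by
    intro j hj
    refine (hβle j).trans ?_
    have h2 : 2 / (1 - c) ≤ (Nat.ceil (2 / (1 - c)) : ℝ) := Nat.le_ceil _
    have h3 : (Nat.ceil (2 / (1 - c)) : ℝ) ≤ (j:ℝ) := by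
      exact_mod_cast le_trans hK₁c hj
    have h4 : 2 / (1 - c) ≤ (j:ℝ) + 1 := by linarith
    have h5 : 1 / ((j:ℝ) + 1) ≤ 1 / (2 / (1 - c)) :=
      one_div_le_one_div_of_le (by positivity) h4
    rwa [one_div_div] at h5
  -- telescoping
  have htel : ∀ N : ℕ, K₁ ≤ N → E N + (A / 2) * ∑ j ∈ Finset.Ico K₁ N, s j ≤ E K₁ := by
    intro N hN
    induction N, hN using Nat.le_induction with
    | base => simp
    | succ N hN ih =>
      have hstep := hstep1 N (le_trans hK₁1 hN) (hβsmall (N + 1) (by omega))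
      rw [Finset.sum_Ico_succ_top hN]
      linarith
  set S₁ : ℝ := (2 / A) * E K₁ with hS₁
  clear_value S₁
  have hS₁nonneg : 0 ≤ S₁ := by
    rw [hS₁]
    exact mul_nonneg (by positivity) (hEnonneg K₁ hK₁1)
  have hsum_s : ∀ N : ℕ, K₁ ≤ N → ∑ j ∈ Finset.Ico K₁ N, s j ≤ S₁ := by
    intro N hN
    have h1 := htel N hN
    have h2 := hEnonneg N (le_trans hK₁1 hN)
    have h3 : (A / 2) * ∑ j ∈ Finset.Ico K₁ N, s j ≤ E K₁ := by linarith
    have hAne : A ≠ 0 := ne_of_gt hApos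
    have e : (2 / A) * ((A / 2) * ∑ j ∈ Finset.Ico K₁ N, s j)
        = ∑ j ∈ Finset.Ico K₁ N, s j := by
      rw [← mul_assoc, show (2 / A) * (A / 2) = 1 by field_simp, one_mul]
    rw [hS₁, ← e]
    exact mul_le_mul_of_nonneg_left h3 (by positivity)
  have hsk : ∀ k : ℕ, K₁ ≤ k → s k ≤ S₁ := by
    intro k hk
    have h1 : s k ≤ ∑ j ∈ Finset.Ico K₁ (k + 1), s j := by
      apply Finset.single_le_sum (fun j _ => hsnonneg j)
      simp [Finset.mem_Ico]
      omega
    exact h1.trans (hsum_s (k + 1) (by omega))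
  -- stage 2: quasi-Fejér boundedness
  set K : ℕ := K₁ + 1 with hK
  set V : ℕ → ℝ := fun j => ‖x (j:ℤ) - xstar‖ ^ 2 with hV
  clear_value V
  have hVnonneg : ∀ j, 0 ≤ V j := fun j => by rw [hV]; positivity
  have hstep2 : ∀ k : ℕ, K ≤ k →
      V (k + 1) ≤ Real.exp (2 * β k) * (V k + (s k + β k * S₁)) := by
    intro k hk
    have hk1 : 1 ≤ k := by omega
    have hγk := hγpos k hk1
    have h := hmain k hk1 xstar
    have hI1 : ⟪x ((k:ℤ) + 1) - x (k:ℤ), xstar - x ((k:ℤ) + 1)⟫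
        = (‖xstar - x (k:ℤ)‖ ^ 2 - ‖x ((k:ℤ) + 1) - x (k:ℤ)‖ ^ 2
            - ‖xstar - x ((k:ℤ) + 1)‖ ^ 2) / 2 := by
      have h1 := norm_add_sq_real (x ((k:ℤ) + 1) - x (k:ℤ)) (xstar - x ((k:ℤ) + 1))
      have he : x ((k:ℤ) + 1) - x (k:ℤ) + (xstar - x ((k:ℤ) + 1)) = xstar - x (k:ℤ) := by
        module
      rw [he] at h1
      linarith
    have h0 : 0 ≤ L / 2 * ‖x ((k:ℤ) + 1) - x (k:ℤ)‖ ^ 2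
        + (1 / γ k) * ⟪x ((k:ℤ) + 1) - x (k:ℤ), xstar - x ((k:ℤ) + 1)⟫
        + (β k / γ k) * ⟪x (k:ℤ) - x ((k:ℤ) - 1), x ((k:ℤ) + 1) - xstar⟫ := by
      have := hxstar (x ((k:ℤ) + 1))
      linarith
    have h0' : 0 ≤ γ k * (L / 2 * ‖x ((k:ℤ) + 1) - x (k:ℤ)‖ ^ 2
        + (1 / γ k) * ⟪x ((k:ℤ) + 1) - x (k:ℤ), xstar - x ((k:ℤ) + 1)⟫
        + (β k / γ k) * ⟪x (k:ℤ) - x ((k:ℤ) - 1), x ((k:ℤ) + 1) - xstar⟫) :=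
      mul_nonneg hγk.le h0
    have hγne : γ k ≠ 0 := ne_of_gt hγk
    have hexpand : ∀ a b d : ℝ, γ k * (L / 2 * a + (1 / γ k) * b + (β k / γ k) * d)
        = (γ k * L) / 2 * a + b + β k * d := by
      intro a b d
      field_simp
    rw [hexpand, hI1] at h0'
    have hI2 : ⟪x (k:ℤ) - x ((k:ℤ) - 1), x ((k:ℤ) + 1) - xstar⟫
        ≤ (‖x (k:ℤ) - x ((k:ℤ) - 1)‖ ^ 2 + ‖x ((k:ℤ) + 1) - xstar‖ ^ 2) / 2 := by
      have h1 := real_inner_le_norm (x (k:ℤ) - x ((k:ℤ) - 1)) (x ((k:ℤ) + 1) - xstar)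
      nlinarith [sq_nonneg (‖x (k:ℤ) - x ((k:ℤ) - 1)‖ - ‖x ((k:ℤ) + 1) - xstar‖)]
    have hqr : ‖x (k:ℤ) - x ((k:ℤ) - 1)‖ ^ 2 ≤ S₁ := by
      have hkm : K₁ ≤ k - 1 := by omega
      have h1 := hsk (k - 1) hkm
      simp only [hs] at h1
      have e1 : ((k - 1 : ℕ) : ℤ) = (k:ℤ) - 1 := by omega
      rw [e1] at h1
      have e2 : (k:ℤ) - 1 + 1 = (k:ℤ) := by ring
      rw [e2] at h1
      exact h1
    have hsymq : ‖xstar - x (k:ℤ)‖ = ‖x (k:ℤ) - xstar‖ := norm_sub_rev _ _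
    have hsymp : ‖xstar - x ((k:ℤ) + 1)‖ = ‖x ((k:ℤ) + 1) - xstar‖ := norm_sub_rev _ _
    rw [hsymq, hsymp] at h0'
    have hβ0 := hβnonneg k
    have hβ2 := hβhalf k hk1
    have hsknn : (0:ℝ) ≤ ‖x ((k:ℤ) + 1) - x (k:ℤ)‖ ^ 2 := by positivity
    have hsg : (γ k * L) / 2 * ‖x ((k:ℤ) + 1) - x (k:ℤ)‖ ^ 2
        ≤ ‖x ((k:ℤ) + 1) - x (k:ℤ)‖ ^ 2 := by
      have h1 : (γ k * L) / 2 ≤ 1 := by linarith [hnum3 k]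
      nlinarith [hsknn]
    have hbI2 : β k * ⟪x (k:ℤ) - x ((k:ℤ) - 1), x ((k:ℤ) + 1) - xstar⟫
        ≤ β k * ((‖x (k:ℤ) - x ((k:ℤ) - 1)‖ ^ 2 + ‖x ((k:ℤ) + 1) - xstar‖ ^ 2) / 2) :=
      mul_le_mul_of_nonneg_left hI2 hβ0
    have hbqr : β k * ‖x (k:ℤ) - x ((k:ℤ) - 1)‖ ^ 2 ≤ β k * S₁ :=
      mul_le_mul_of_nonneg_left hqr hβ0
    have hmain2 : (1 - β k) * ‖x ((k:ℤ) + 1) - xstar‖ ^ 2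
        ≤ ‖x (k:ℤ) - xstar‖ ^ 2 + ‖x ((k:ℤ) + 1) - x (k:ℤ)‖ ^ 2 + β k * S₁ := by
      nlinarith [h0', hbI2, hbqr, hsg]
    have hVp : (0:ℝ) ≤ ‖x ((k:ℤ) + 1) - xstar‖ ^ 2 := by positivity
    have hR : (0:ℝ) ≤ ‖x (k:ℤ) - xstar‖ ^ 2 + ‖x ((k:ℤ) + 1) - x (k:ℤ)‖ ^ 2 + β k * S₁ :=
      add_nonneg (add_nonneg (by positivity) (by positivity)) (mul_nonneg hβ0 hS₁nonneg)
    have h1p2 : ‖x ((k:ℤ) + 1) - xstar‖ ^ 2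
        ≤ (1 + 2 * β k) * (‖x (k:ℤ) - xstar‖ ^ 2 + ‖x ((k:ℤ) + 1) - x (k:ℤ)‖ ^ 2 + β k * S₁) := by
      nlinarith [hmain2, hVp, hR, mul_nonneg (by linarith : (0:ℝ) ≤ 1 + 2 * β k)
        (sub_nonneg.2 hmain2), mul_nonneg (mul_nonneg hβ0 (by linarith : (0:ℝ) ≤ 1 - 2 * β k)) hVp]
    have hexp2 : 1 + 2 * β k ≤ Real.exp (2 * β k) := by
      linarith [Real.add_one_le_exp (2 * β k)]
    have hfin : (1 + 2 * β k) * (‖x (k:ℤ) - xstar‖ ^ 2 + ‖x ((k:ℤ) + 1) - x (k:ℤ)‖ ^ 2 + β k * S₁)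
        ≤ Real.exp (2 * β k) * (‖x (k:ℤ) - xstar‖ ^ 2 + ‖x ((k:ℤ) + 1) - x (k:ℤ)‖ ^ 2 + β k * S₁) :=
      mul_le_mul_of_nonneg_right hexp2 hR
    simp only [hV, hs]
    have hc1' : ((k + 1 : ℕ) : ℤ) = (k:ℤ) + 1 := by push_cast; ring
    rw [hc1']
    have hre : Real.exp (2 * β k) * (‖x (k:ℤ) - xstar‖ ^ 2 + (‖x ((k:ℤ) + 1) - x (k:ℤ)‖ ^ 2 + β k * S₁))
        = Real.exp (2 * β k) * (‖x (k:ℤ) - xstar‖ ^ 2 + ‖x ((k:ℤ) + 1) - x (k:ℤ)‖ ^ 2 + β k * S₁) := by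
      ring
    rw [hre]
    linarith
  have hbnonneg : ∀ j : ℕ, 0 ≤ s j + β j * S₁ :=
    fun j => add_nonneg (hsnonneg j) (mul_nonneg (hβnonneg j) hS₁nonneg)
  have hind : ∀ N : ℕ, K ≤ N →
      V N ≤ Real.exp (2 * ∑ j ∈ Finset.Ico K N, β j)
        * (V K + ∑ j ∈ Finset.Ico K N, (s j + β j * S₁)) := by
    intro N hN
    induction N, hN using Nat.le_induction with
    | base => simp
    | succ N hN ih =>
      have hstep := hstep2 N hN
      have hTnn : 0 ≤ ∑ j ∈ Finset.Ico K N, β j :=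
        Finset.sum_nonneg fun j _ => hβnonneg j
      have hCnn : 0 ≤ ∑ j ∈ Finset.Ico K N, (s j + β j * S₁) :=
        Finset.sum_nonneg fun j _ => hbnonneg j
      have hVKnn : 0 ≤ V K := hVnonneg K
      rw [Finset.sum_Ico_succ_top hN, Finset.sum_Ico_succ_top hN]
      have he1 : Real.exp (2 * (∑ j ∈ Finset.Ico K N, β j + β N))
          = Real.exp (2 * ∑ j ∈ Finset.Ico K N, β j) * Real.exp (2 * β N) := by
        rw [← Real.exp_add]
        ring_nf
      rw [he1]
      have hE1 : (1:ℝ) ≤ Real.exp (2 * ∑ j ∈ Finset.Ico K N, β j) :=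
        Real.one_le_exp (by positivity)
      have s1 : V N + (s N + β N * S₁)
          ≤ Real.exp (2 * ∑ j ∈ Finset.Ico K N, β j)
              * (V K + ∑ j ∈ Finset.Ico K N, (s j + β j * S₁))
            + Real.exp (2 * ∑ j ∈ Finset.Ico K N, β j) * (s N + β N * S₁) := by
        nlinarith [ih, mul_nonneg (by linarith : (0:ℝ) ≤ Real.exp (2 * ∑ j ∈ Finset.Ico K N, β j) - 1) (hbnonneg N)]
      have s2 := mul_le_mul_of_nonneg_left s1 (Real.exp_pos (2 * β N)).le
      calc V (N + 1) ≤ Real.exp (2 * β N) * (V N + (s N + β N * S₁)) := hstep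
        _ ≤ Real.exp (2 * β N) * (Real.exp (2 * ∑ j ∈ Finset.Ico K N, β j)
              * (V K + ∑ j ∈ Finset.Ico K N, (s j + β j * S₁))
            + Real.exp (2 * ∑ j ∈ Finset.Ico K N, β j) * (s N + β N * S₁)) := s2
        _ = Real.exp (2 * ∑ j ∈ Finset.Ico K N, β j) * Real.exp (2 * β N)
            * (V K + (∑ j ∈ Finset.Ico K N, (s j + β j * S₁) + (s N + β N * S₁))) := by
          ring
  -- summability of β
  have hsummable : Summable β := by
    have h1 : Summable (fun n : ℕ => 1 / (n:ℝ) ^ θ) := Real.summable_one_div_nat_rpow.2 hθ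
    have h2 := (summable_nat_add_iff 1).2 h1
    have h3 : Summable (fun n : ℕ => 1 / ((n:ℝ) + 1) ^ θ) := by
      refine h2.congr fun n => ?_
      push_cast
      rfl
    exact h3.congr fun k => (hβ k).symm
  set B := ∑' j, β j with hB
  have hBsum : ∀ t : Finset ℕ, ∑ j ∈ t, β j ≤ B :=
    fun t => Summable.sum_le_tsum t (fun i _ => hβnonneg i) hsummable
  have hB0 : 0 ≤ B := tsum_nonneg hβnonneg
  have hCbound : ∀ N : ℕ, K ≤ N →
      ∑ j ∈ Finset.Ico K N, (s j + β j * S₁) ≤ S₁ + B * S₁ := by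
    intro N hN
    rw [Finset.sum_add_distrib]
    have h1 : ∑ j ∈ Finset.Ico K N, s j ≤ S₁ := by
      have hsub : Finset.Ico K N ⊆ Finset.Ico K₁ N := Finset.Ico_subset_Ico (by omega) le_rfl
      exact (Finset.sum_le_sum_of_subset_of_nonneg hsub fun j _ _ => hsnonneg j).trans
        (hsum_s N (by omega))
    have h2 : ∑ j ∈ Finset.Ico K N, β j * S₁ ≤ B * S₁ := by
      rw [← Finset.sum_mul]
      exact mul_le_mul_of_nonneg_right (hBsum _) hS₁nonneg
    linarith
  set M₂ := Real.exp (2 * B) * (V K + (S₁ + B * S₁)) with hM₂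
  have hM₂b : ∀ N : ℕ, K ≤ N → V N ≤ M₂ := by
    intro N hN
    refine (hind N hN).trans ?_
    rw [hM₂]
    have hT : ∑ j ∈ Finset.Ico K N, β j ≤ B := hBsum _
    have h1 : Real.exp (2 * ∑ j ∈ Finset.Ico K N, β j) ≤ Real.exp (2 * B) :=
      Real.exp_le_exp.2 (by linarith)
    have h2 : V K + ∑ j ∈ Finset.Ico K N, (s j + β j * S₁) ≤ V K + (S₁ + B * S₁) := by
      linarith [hCbound N hN]
    have h3 : 0 ≤ V K + ∑ j ∈ Finset.Ico K N, (s j + β j * S₁) :=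
      add_nonneg (hVnonneg K) (Finset.sum_nonneg fun j _ => hbnonneg j)
    exact mul_le_mul h1 h2 h3 (Real.exp_pos _).le
  -- final bound
  refine ⟨(∑ j ∈ Finset.range K, ‖x (j:ℤ)‖) + (‖xstar‖ + Real.sqrt M₂), ?_⟩
  intro k
  have hsumnn : 0 ≤ ∑ j ∈ Finset.range K, ‖x (j:ℤ)‖ :=
    Finset.sum_nonneg fun j _ => norm_nonneg _
  by_cases hk : k < K
  · have h1 : ‖x (k:ℤ)‖ ≤ ∑ j ∈ Finset.range K, ‖x (j:ℤ)‖ :=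
      Finset.single_le_sum (f := fun j : ℕ => ‖x (j:ℤ)‖) (fun j _ => norm_nonneg _)
        (Finset.mem_range.2 hk)
    have h2 : 0 ≤ ‖xstar‖ + Real.sqrt M₂ := add_nonneg (norm_nonneg _) (Real.sqrt_nonneg _)
    linarith
  · push_neg at hk
    have h1 := hM₂b k hk
    simp only [hV] at h1
    have h2 : ‖x (k:ℤ) - xstar‖ ≤ Real.sqrt M₂ := by
      rw [show ‖x (k:ℤ) - xstar‖ = Real.sqrt (‖x (k:ℤ) - xstar‖ ^ 2) from
        (Real.sqrt_sq (norm_nonneg _)).symm]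
      exact Real.sqrt_le_sqrt h1
    have h3 : ‖x (k:ℤ)‖ ≤ ‖x (k:ℤ) - xstar‖ + ‖xstar‖ := by
      calc ‖x (k:ℤ)‖ = ‖x (k:ℤ) - xstar + xstar‖ := by rw [sub_add_cancel]
        _ ≤ _ := norm_add_le _ _
    linarith
end

section
/- Heavy-ball method, non-ergodic rate: let f : ℝ^n → ℝ be convex, coercive, and differentiable with ∇f Lipschitz continuous with constant L > 0, with argmin f nonempty. Fix β ∈ (0,1), c ∈ (0,1), and γ = 2(1−β)c/L, and given x^{−1}, x^0 generate x^{k+1} = x^k − γ∇f(x^k) + β(x^k − x^{k−1}). Then there exists C > 0 such that f(x^k) − min f ≤ C/k for all k ≥ 1. -/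
open RealInnerProductSpace

section HeavyBallAux

variable {E : Type*} [NormedAddCommGroup E] [InnerProductSpace ℝ E] [CompleteSpace E]



lemma lineDeriv' (f : E → ℝ) (f' : E → E) (hf' : ∀ p, HasGradientAt f (f' p) p)
    (x y : E) (t : ℝ) :
    HasDerivAt (fun t : ℝ => f (x + t • (y - x))) ⟪f' (x + t • (y - x)), y - x⟫ t := by
  have h1 : HasDerivAt (fun t : ℝ => x + t • (y - x)) (y - x) t := by
    simpa using ((hasDerivAt_id t).smul_const (y - x)).const_add x
  have h2 := ((hf' (x + t • (y - x))).hasFDerivAt).comp_hasDerivAt t h1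
  simpa [InnerProductSpace.toDual_apply_apply, Function.comp_def] using h2

lemma convex_first_order (f : E → ℝ) (f' : E → E) (hconv : ConvexOn ℝ Set.univ f)
    (hf' : ∀ p, HasGradientAt f (f' p) p) (x y : E) :
    f x + ⟪f' x, y - x⟫ ≤ f y := by
  have hd := lineDeriv' f f' hf' x y 0
  simp only [zero_smul, add_zero] at hd
  have hslope : Filter.Tendsto (slope (fun t : ℝ => f (x + t • (y - x))) 0)
      (nhdsWithin 0 (Set.Ioi 0)) (nhds ⟪f' x, y - x⟫) := by
    have := hasDerivAt_iff_tendsto_slope.mp hd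
    exact this.mono_left (nhdsWithin_mono _ (fun t ht => ne_of_gt ht))
  have hle : ⟪f' x, y - x⟫ ≤ f y - f x := by
    refine le_of_tendsto hslope ?_
    filter_upwards [Ioc_mem_nhdsGT_of_mem (Set.left_mem_Ico.mpr one_pos)] with t ht
    have ht0 : 0 < t := ht.1
    have ht1 : t ≤ 1 := ht.2
    have hcv := hconv.2 (Set.mem_univ x) (Set.mem_univ y) (by linarith : (0:ℝ) ≤ 1 - t)
      ht0.le (by ring)
    have hpt : (1 - t) • x + t • y = x + t • (y - x) := by module
    rw [hpt] at hcv
    simp only [smul_eq_mul] at hcv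
    rw [slope_def_field]
    simp only [zero_smul, add_zero, sub_zero]
    rw [div_le_iff₀ ht0]
    nlinarith [hcv]
  linarith

lemma descent_lemma (f : E → ℝ) (f' : E → E) (L : ℝ)
    (hf' : ∀ p, HasGradientAt f (f' p) p)
    (hlip : ∀ p q, ‖f' p - f' q‖ ≤ L * ‖p - q‖) (x y : E) :
    f y ≤ f x + ⟪f' x, y - x⟫ + L / 2 * ‖y - x‖ ^ 2 := by
  set d : ℝ → ℝ := fun t => ⟪f' (x + t • (y - x)), y - x⟫ with hd
  have hf'cont : Continuous f' := by
    have : LipschitzWith (Real.toNNReal L) f' := by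
      intro p q
      rw [edist_dist, edist_dist, dist_eq_norm, dist_eq_norm]
      rw [← ENNReal.ofReal_coe_nnreal]
      rw [← ENNReal.ofReal_mul (by positivity)]
      apply ENNReal.ofReal_le_ofReal
      calc ‖f' p - f' q‖ ≤ L * ‖p - q‖ := hlip p q
        _ ≤ _ := by
            apply mul_le_mul_of_nonneg_right _ (norm_nonneg _)
            simp [Real.coe_toNNReal', le_max_left]
    exact this.continuous
  have hdcont : Continuous d := by
    apply Continuous.inner
    · exact hf'cont.comp (by continuity)
    · exact continuous_const
  have hint : f y - f x = ∫ t in (0:ℝ)..1, d t := by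
    have := intervalIntegral.integral_eq_sub_of_hasDerivAt
      (f := fun t : ℝ => f (x + t • (y - x)))
      (fun t _ => lineDeriv' f f' hf' x y t) (hdcont.intervalIntegrable 0 1)
    simpa using this.symm
  have hub : ∀ t ∈ Set.Icc (0:ℝ) 1, d t ≤ d 0 + (L * ‖y - x‖ ^ 2) * t := by
    intro t ht
    have h1 : d t - d 0 = ⟪f' (x + t • (y - x)) - f' x, y - x⟫ := by
      simp [hd, inner_sub_left]
    have h2 : ⟪f' (x + t • (y - x)) - f' x, y - x⟫ ≤ ‖f' (x + t • (y - x)) - f' x‖ * ‖y - x‖ :=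
      real_inner_le_norm _ _
    have h3 : ‖f' (x + t • (y - x)) - f' x‖ ≤ L * (t * ‖y - x‖) := by
      have := hlip (x + t • (y - x)) x
      simpa [norm_smul, abs_of_nonneg ht.1] using this
    nlinarith [norm_nonneg (y - x), ht.1, mul_le_mul_of_nonneg_right h3 (norm_nonneg (y - x))]
  have hmono : ∫ t in (0:ℝ)..1, d t ≤ ∫ t in (0:ℝ)..1, (d 0 + (L * ‖y - x‖ ^ 2) * t) := by
    apply intervalIntegral.integral_mono_on zero_le_one (hdcont.intervalIntegrable 0 1)
    · exact (by continuity : Continuous fun t : ℝ => d 0 + (L * ‖y - x‖ ^ 2) * t).intervalIntegrable 0 1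
    · exact hub
  have hval : ∫ t in (0:ℝ)..1, (d 0 + (L * ‖y - x‖ ^ 2) * t) = d 0 + L * ‖y - x‖ ^ 2 / 2 := by
    rw [intervalIntegral.integral_add (intervalIntegrable_const)
      ((intervalIntegral.intervalIntegrable_id).const_mul _)]
    rw [intervalIntegral.integral_const_mul, integral_id]
    simp; ring
  have hfin : f y ≤ f x + d 0 + L / 2 * ‖y - x‖ ^ 2 := by linarith [hint, hmono, hval.le]
  simpa [hd] using hfin

lemma grad_min_zero (f : E → ℝ) (f' : E → E) (hf' : ∀ p, HasGradientAt f (f' p) p)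
    (xstar : E) (hxstar : ∀ y, f xstar ≤ f y) : f' xstar = 0 := by
  have hloc : IsLocalMin f xstar := Filter.Eventually.of_forall hxstar
  have h0 := hloc.hasFDerivAt_eq_zero (hf' xstar).hasFDerivAt
  exact (LinearIsometryEquiv.map_eq_zero_iff (InnerProductSpace.toDual ℝ E)).mp h0

/-- `‖∇f(x)‖² ≤ 2 L (f x − min f)` -/
lemma gradsq_le (f : E → ℝ) (f' : E → E) (L : ℝ) (hL : 0 < L)
    (hf' : ∀ p, HasGradientAt f (f' p) p)
    (hlip : ∀ p q, ‖f' p - f' q‖ ≤ L * ‖p - q‖)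
    (xstar : E) (hxstar : ∀ y, f xstar ≤ f y) (x0 : E) :
    ‖f' x0‖ ^ 2 ≤ 2 * L * (f x0 - f xstar) := by
  have hdes := descent_lemma f f' L hf' hlip x0 (x0 - (1 / L) • f' x0)
  have h1 : (x0 - (1 / L) • f' x0) - x0 = -((1/L) • f' x0) := by abel
  rw [h1] at hdes
  rw [inner_neg_right, real_inner_smul_right, real_inner_self_eq_norm_sq] at hdes
  rw [norm_neg, norm_smul] at hdes
  have h2 : ‖(1:ℝ)/L‖ = 1/L := by rw [Real.norm_eq_abs]; exact abs_of_pos (by positivity)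
  rw [h2] at hdes
  have h3 := hxstar (x0 - (1 / L) • f' x0)
  have hL' : L ≠ 0 := ne_of_gt hL
  have : f xstar ≤ f x0 - 1/L * ‖f' x0‖^2 + L/2 * (1/L)^2 * ‖f' x0‖^2 := by
    calc f xstar ≤ f (x0 - (1 / L) • f' x0) := h3
      _ ≤ _ := by rw [mul_pow] at hdes; linarith
  have h4 : L/2 * (1/L)^2 = 1/(2*L) := by field_simp
  rw [h4] at this
  have h5 : 1/L * ‖f' x0‖^2 - 1/(2*L) * ‖f' x0‖^2 = ‖f' x0‖^2 / (2*L) := by field_simp; ring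
  have h6 : ‖f' x0‖^2 / (2*L) ≤ f x0 - f xstar := by linarith
  rw [div_le_iff₀ (by positivity)] at h6
  linarith

/-- cocoercivity at the minimizer, denominator-free form:
`2 L (f x₀ − f x*) + ‖∇f(x₀)‖² ≤ 2 L ⟪∇f(x₀), x₀ − x*⟫`. -/
lemma coco_min (f : E → ℝ) (f' : E → E) (L : ℝ) (hL : 0 < L)
    (hconv : ConvexOn ℝ Set.univ f)
    (hf' : ∀ p, HasGradientAt f (f' p) p)
    (hlip : ∀ p q, ‖f' p - f' q‖ ≤ L * ‖p - q‖)
    (xstar : E) (hxstar : ∀ y, f xstar ≤ f y) (x0 : E) :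
    2 * L * (f x0 - f xstar) + ‖f' x0‖ ^ 2 ≤ 2 * L * ⟪f' x0, x0 - xstar⟫ := by
  set g0 := f' x0 with hg0
  set φ : E → ℝ := fun z => f z - ⟪g0, z⟫ with hφ
  set φ' : E → E := fun z => f' z - g0 with hφ'
  have hφgrad : ∀ p, HasGradientAt φ (φ' p) p := by
    intro p
    rw [hasGradientAt_iff_hasFDerivAt]
    have h1 : (InnerProductSpace.toDual ℝ E) (φ' p)
        = (InnerProductSpace.toDual ℝ E) (f' p) - (InnerProductSpace.toDual ℝ E) g0 := by
      simp [hφ']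
    rw [h1]
    have h2 : HasFDerivAt f ((InnerProductSpace.toDual ℝ E) (f' p)) p := (hf' p).hasFDerivAt
    have h3 : HasFDerivAt (fun z => ⟪g0, z⟫) ((InnerProductSpace.toDual ℝ E) g0) p := by
      have := ((InnerProductSpace.toDual ℝ E) g0).hasFDerivAt (x := p)
      apply this.congr_of_eventuallyEq
      filter_upwards with z
      simp [InnerProductSpace.toDual_apply_apply]
    exact h2.sub h3
  have hφlip : ∀ p q, ‖φ' p - φ' q‖ ≤ L * ‖p - q‖ := by
    intro p q
    have : φ' p - φ' q = f' p - f' q := by simp [hφ']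
    rw [this]; exact hlip p q
  have hφconv : ConvexOn ℝ Set.univ φ := by
    apply hconv.sub
    refine ⟨convex_univ, ?_⟩
    intro p _ q _ a b _ _ _
    simp only [smul_eq_mul]
    rw [inner_add_right, real_inner_smul_right, real_inner_smul_right]
  have hφmin : ∀ z, φ x0 ≤ φ z := by
    intro z
    have := convex_first_order φ φ' hφconv hφgrad x0 z
    have h0 : φ' x0 = 0 := by simp [hφ', hg0]
    rw [h0] at this
    simpa using this
  -- apply descent lemma for φ at xstar towards u = xstar + (1/L) • g0
  have hstar0 : f' xstar = 0 := grad_min_zero f f' hf' xstar hxstar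
  have hφ'star : φ' xstar = -g0 := by simp [hφ', hstar0]
  have hdes := descent_lemma φ φ' L hφgrad hφlip xstar (xstar + (1 / L) • g0)
  have h4 : (xstar + (1 / L) • g0) - xstar = (1 / L) • g0 := by abel
  rw [h4, hφ'star, inner_neg_left, real_inner_smul_right, real_inner_self_eq_norm_sq,
    norm_smul] at hdes
  have h2 : ‖(1:ℝ)/L‖ = 1/L := by
    rw [Real.norm_eq_abs]; exact abs_of_pos (by positivity)
  rw [h2, mul_pow] at hdes
  have h5 := hφmin (xstar + (1 / L) • g0)
  have h6 : φ x0 ≤ φ xstar - ‖g0‖^2/(2*L) := by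
    have e : -(1 / L * ‖g0‖ ^ 2) + L / 2 * ((1/L)^2 * ‖g0‖^2) = -(‖g0‖^2/(2*L)) := by
      field_simp; ring
    calc φ x0 ≤ φ (xstar + (1 / L) • g0) := h5
      _ ≤ φ xstar + -(1 / L * ‖g0‖ ^ 2) + L / 2 * ((1/L)^2 * ‖g0‖^2) := hdes
      _ = φ xstar - ‖g0‖^2/(2*L) := by rw [add_assoc, e]; ring
  have h7 : φ x0 = f x0 - ⟪g0, x0⟫ := rfl
  have h8 : φ xstar = f xstar - ⟪g0, xstar⟫ := rfl
  have h9 : ⟪g0, x0 - xstar⟫ = ⟪g0, x0⟫ - ⟪g0, xstar⟫ := inner_sub_right _ _ _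
  rw [h7, h8] at h6
  have h10 : ‖g0‖^2/(2*L) ≤ ⟪g0, x0 - xstar⟫ - (f x0 - f xstar) := by
    rw [h9]; linarith
  rw [div_le_iff₀ (by positivity : (0:ℝ) < 2*L)] at h10
  nlinarith [h10]

end HeavyBallAux


lemma scalar1 (η s L c A0 A1 I1 I2 G d0 d1 : ℝ)
    (hη0 : 0 < η) (hs0 : 0 < s) (hL : 0 < L) (hc0 : 0 < c) (hc1 : c < 1)
    (hηL : η * L = 2 * c)
    (hexp : A1 = A0 - 2 * η * (I1 + s * I2) + η ^ 2 * G)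
    (hco : 2 * L * d0 + G ≤ 2 * L * I1) (hfo : d0 - d1 ≤ I2)
    (hgsq : G ≤ 2 * L * d0)
    (hG : 0 ≤ G) (hd0 : 0 ≤ d0) (hd1 : 0 ≤ d1) :
    A1 + 2 * η * s * d0 + (2 * η * (1 - max (2 * c - 1) 0)) * d0
      ≤ A0 + 2 * η * s * d1 := by
  rw [← mul_le_mul_iff_right₀ hL]
  have hcoη := mul_le_mul_of_nonneg_left hco hη0.le
  have hfoL := mul_le_mul_of_nonneg_left hfo
    (by positivity : (0:ℝ) ≤ 2 * η * s * L)
  rcases le_or_gt (2 * c) 1 with h1 | h1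
  · have hmax : max (2 * c - 1) 0 = 0 := max_eq_right (by linarith)
    rw [hmax]
    have hηL1 : η * L ≤ 1 := by rw [hηL]; linarith
    have hGG := mul_le_mul_of_nonneg_right hηL1 (mul_nonneg hη0.le hG)
    nlinarith [hexp]
  · have hmax : max (2 * c - 1) 0 = 2 * c - 1 := max_eq_left (by linarith)
    rw [hmax]
    have hgsqs := mul_le_mul_of_nonneg_left hgsq
      (by nlinarith : (0:ℝ) ≤ (2 * c - 1) * η)
    have hexpL : L * A1 = L * (A0 - 2 * η * (I1 + s * I2) + η ^ 2 * G) := by rw [hexp]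
    have e2 : η ^ 2 * G * L = 2 * c * (η * G) := by
      rw [pow_two, mul_assoc, mul_comm G L, ← mul_assoc, mul_assoc η η L, hηL]
      ring
    nlinarith [hexpL, e2, hcoη, hfoL, hgsqs]

lemma scalar2 (L c β γ dk dk1 Vk Vk1 Ik IG : ℝ)
    (hL : 0 < L) (hc0 : 0 < c) (hc1 : c < 1) (hβ0 : 0 < β) (hβ1 : β < 1)
    (hγ0 : 0 < γ) (hLγ : γ * L = 2 * (1 - β) * c)
    (hdes : dk1 ≤ dk + IG + L / 2 * Vk1)
    (hinner : γ * IG = β * Ik - Vk1)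
    (hip : 2 * Ik ≤ Vk + Vk1)
    (hVk : 0 ≤ Vk) (hVk1 : 0 ≤ Vk1) :
    2 * γ * dk1 + β * Vk1 + (2 * (1 - β) * (1 - c)) * Vk1 ≤ 2 * γ * dk + β * Vk := by
  have hdesγ := mul_le_mul_of_nonneg_left hdes (by positivity : (0:ℝ) ≤ 2 * γ)
  have hipβ := mul_le_mul_of_nonneg_left hip hβ0.le
  nlinarith [hinner, hLγ]



/-- non-ergodic `O(1/k)` rate for the heavy-ball method. Let `f` be
convex, coercive, differentiable with `L`-Lipschitz gradient, `argmin f ≠ ∅`. For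
`β ∈ (0,1)`, `c ∈ (0,1)`, `γ = 2(1−β)c/L` and iterates
`xᵏ⁺¹ = xᵏ − γ∇f(xᵏ) + β(xᵏ − xᵏ⁻¹)`, we have `f(xᵏ) − min f ≤ C/k` for all `k ≥ 1`. -/
theorem pigd_stmt7
    {n : ℕ} (f : EuclideanSpace ℝ (Fin n) → ℝ)
    (f' : EuclideanSpace ℝ (Fin n) → EuclideanSpace ℝ (Fin n))
    (L c β γ : ℝ) (hL : 0 < L) (hc0 : 0 < c) (hc1 : c < 1)
    (hβ0 : 0 < β) (hβ1 : β < 1) (hγ : γ = 2 * (1 - β) * c / L)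
    (hfconv : ConvexOn ℝ Set.univ f)
    (hf' : ∀ x, HasGradientAt f (f' x) x)
    (hlip : ∀ x y, ‖f' x - f' y‖ ≤ L * ‖x - y‖)
    -- `f` is coercive
    (hcoer : Filter.Tendsto f (Filter.comap norm Filter.atTop) Filter.atTop)
    -- `argmin f` is nonempty and `f xstar = min f`
    (xstar : EuclideanSpace ℝ (Fin n)) (hxstar : ∀ y, f xstar ≤ f y)
    (x : ℤ → EuclideanSpace ℝ (Fin n))
    (hiter : ∀ k : ℕ,
      x (k + 1) = x k - γ • f' (x k) + β • (x k - x ((k : ℤ) - 1))) :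
    ∃ C : ℝ, 0 < C ∧ ∀ k : ℕ, 1 ≤ k → f (x k) - f xstar ≤ C / k := by
  have hβ' : 0 < 1 - β := by linarith
  have hγ0 : 0 < γ := by rw [hγ]; positivity
  set η : ℝ := 2 * c / L with hη
  have hη0 : 0 < η := by rw [hη]; positivity
  have hηL : η * L = 2 * c := by rw [hη]; field_simp
  have hγη : γ = (1 - β) * η := by rw [hγ, hη]; ring
  have hLγ : γ * L = 2 * (1 - β) * c := by rw [hγ]; field_simp
  set s : ℝ := β / (1 - β) with hs
  have hs0 : 0 < s := by rw [hs]; positivity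
  set v : ℕ → EuclideanSpace ℝ (Fin n) := fun k => x k - x ((k : ℤ) - 1) with hv
  set D : ℤ → ℝ := fun m => f (x m) - f xstar with hD
  have hD0 : ∀ m, 0 ≤ D m := fun m => sub_nonneg.mpr (hxstar _)
  have hvrec : ∀ k : ℕ, v (k + 1) = β • v k - γ • f' (x (k : ℤ)) := by
    intro k
    have h := hiter k
    show x ((k + 1 : ℕ) : ℤ) - x (((k + 1 : ℕ) : ℤ) - 1)
      = β • (x (k : ℤ) - x ((k : ℤ) - 1)) - γ • f' (x (k : ℤ))
    push_cast
    rw [show ((k : ℤ) + 1 - 1) = (k : ℤ) by ring, h]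
    module
  have hxv : ∀ k : ℕ, x ((k : ℤ) + 1) = x (k : ℤ) + v (k + 1) := by
    intro k
    show _ = x (k : ℤ) + (x ((k + 1 : ℕ) : ℤ) - x (((k + 1 : ℕ) : ℤ) - 1))
    push_cast
    rw [show ((k : ℤ) + 1 - 1) = (k : ℤ) by ring]
    abel
  set z : ℕ → EuclideanSpace ℝ (Fin n) := fun k => x (k : ℤ) + s • v k with hz
  have hzrec : ∀ k : ℕ, z (k + 1) = z k - η • f' (x (k : ℤ)) := by
    intro k
    show x ((k + 1 : ℕ) : ℤ) + s • v (k + 1)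
      = x (k : ℤ) + s • v k - η • f' (x (k : ℤ))
    push_cast
    rw [hxv k, hvrec k, hs, hγη]
    match_scalars <;> field_simp <;> ring
  -- key quantities
  set aa : ℝ := 2 * η * (1 - max (2 * c - 1) 0) with haa_def
  have haa : 0 < aa := by
    have h1 : max (2 * c - 1) 0 < 1 := max_lt (by linarith) one_pos
    rw [haa_def]
    have : 0 < 1 - max (2 * c - 1) 0 := by linarith
    positivity
  have hstepz : ∀ k : ℕ, ‖z (k + 1) - xstar‖ ^ 2 + 2 * η * s * D (k : ℤ) + aa * D (k : ℤ)
      ≤ ‖z k - xstar‖ ^ 2 + 2 * η * s * D ((k : ℤ) - 1) := by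
    intro k
    set gk := f' (x (k : ℤ)) with hgk
    have hexp : ‖z (k + 1) - xstar‖ ^ 2
        = ‖z k - xstar‖ ^ 2 - 2 * η * (⟪gk, x (k : ℤ) - xstar⟫ + s * ⟪gk, v k⟫)
          + η ^ 2 * ‖gk‖ ^ 2 := by
      rw [hzrec k]
      rw [show z k - η • gk - xstar = (z k - xstar) - η • gk from by abel]
      rw [norm_sub_sq_real, real_inner_smul_right, norm_smul, Real.norm_eq_abs,
        abs_of_pos hη0, mul_pow, real_inner_comm]
      rw [show z k - xstar = (x (k : ℤ) - xstar) + s • v k from by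
        simp only [hz]; abel]
      rw [inner_add_right, real_inner_smul_right]
      ring
    have hco := coco_min f f' L hL hfconv hf' hlip xstar hxstar (x (k : ℤ))
    have hfo := convex_first_order f f' hfconv hf' (x (k : ℤ)) (x ((k : ℤ) - 1))
    have hfo' : D (k : ℤ) - D ((k : ℤ) - 1) ≤ ⟪gk, v k⟫ := by
      have h1 : x ((k : ℤ) - 1) - x (k : ℤ) = -(v k) := by simp only [hv]; abel
      rw [h1, inner_neg_right] at hfo
      simp only [hD]
      linarith
    have hgsq := gradsq_le f f' L hL hf' hlip xstar hxstar (x (k : ℤ))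
    have hDk : f (x (k : ℤ)) - f xstar = D (k : ℤ) := rfl
    rw [hDk] at hco hgsq
    rw [haa_def]
    exact scalar1 η s L c _ _ _ _ _ _ _ hη0 hs0 hL hc0 hc1 hηL hexp hco hfo' hgsq
      (sq_nonneg _) (hD0 _) (hD0 _)
  -- Lyapunov step
  set F : ℕ → ℝ := fun k => 2 * γ * D (k : ℤ) + β * ‖v k‖ ^ 2 with hF
  have hstepF : ∀ k : ℕ,
      F (k + 1) + (2 * (1 - β) * (1 - c)) * ‖v (k + 1)‖ ^ 2 ≤ F k := by
    intro k
    set gk := f' (x (k : ℤ)) with hgk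
    have hdes := descent_lemma f f' L hf' hlip (x (k : ℤ)) (x ((k : ℤ) + 1))
    have hxd : x ((k : ℤ) + 1) - x (k : ℤ) = v (k + 1) := by
      rw [hxv k]; abel
    rw [hxd] at hdes
    have hdes' : D ((k : ℤ) + 1) ≤ D (k : ℤ) + ⟪gk, v (k + 1)⟫ + L / 2 * ‖v (k + 1)‖ ^ 2 := by
      simp only [hD]
      linarith
    have hinner : γ * ⟪gk, v (k + 1)⟫ = β * ⟪v k, v (k + 1)⟫ - ‖v (k + 1)‖ ^ 2 := by
      have h2 : γ • gk = β • v k - v (k + 1) := by rw [hvrec k]; abel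
      calc γ * ⟪gk, v (k + 1)⟫ = ⟪γ • gk, v (k + 1)⟫ := (real_inner_smul_left _ _ _).symm
        _ = ⟪β • v k - v (k + 1), v (k + 1)⟫ := by rw [h2]
        _ = β * ⟪v k, v (k + 1)⟫ - ‖v (k + 1)‖ ^ 2 := by
            rw [inner_sub_left, real_inner_smul_left, real_inner_self_eq_norm_sq]
    have hip : 2 * ⟪v k, v (k + 1)⟫ ≤ ‖v k‖ ^ 2 + ‖v (k + 1)‖ ^ 2 := by
      have h3 := norm_sub_sq_real (v k) (v (k + 1))
      nlinarith [sq_nonneg ‖v k - v (k + 1)‖]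
    have key := scalar2 L c β γ (D (k : ℤ)) (D ((k : ℤ) + 1)) (‖v k‖ ^ 2) (‖v (k + 1)‖ ^ 2)
      (⟪v k, v (k + 1)⟫) (⟪gk, v (k + 1)⟫) hL hc0 hc1 hβ0 hβ1 hγ0 hLγ hdes' hinner hip
      (sq_nonneg _) (sq_nonneg _)
    have hcast : ((k + 1 : ℕ) : ℤ) = (k : ℤ) + 1 := by push_cast; ring
    simp only [hF, hcast]
    linarith
  -- nonnegativity and monotonicity
  have hε20 : (0:ℝ) < 2 * (1 - β) * (1 - c) := by
    have h1 : (0:ℝ) < 1 - c := by linarith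
    positivity
  have hF0 : ∀ k, 0 ≤ F k := fun k =>
    add_nonneg (mul_nonneg (by positivity) (hD0 _)) (mul_nonneg hβ0.le (sq_nonneg _))
  have hFanti : ∀ {j k : ℕ}, j ≤ k → F k ≤ F j := by
    intro j k hjk
    refine antitone_nat_of_succ_le (fun m => ?_) hjk
    have h1 := hstepF m
    have h2 : 0 ≤ 2 * (1 - β) * (1 - c) * ‖v (m + 1)‖ ^ 2 :=
      mul_nonneg hε20.le (sq_nonneg _)
    linarith
  set Gq : ℕ → ℝ := fun k => ‖z k - xstar‖ ^ 2 + 2 * η * s * D ((k : ℤ) - 1) with hGq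
  have hGq0 : ∀ k, 0 ≤ Gq k := fun k =>
    add_nonneg (sq_nonneg _) (mul_nonneg (by positivity) (hD0 _))
  have hGqstep : ∀ k : ℕ, Gq (k + 1) + aa * D (k : ℤ) ≤ Gq k := by
    intro k
    have h := hstepz k
    have hcast : ((k + 1 : ℕ) : ℤ) - 1 = (k : ℤ) := by push_cast; ring
    simp only [hGq, hcast]
    linarith
  have hDsum : ∀ k : ℕ, Gq k + aa * ∑ j ∈ Finset.range k, D (j : ℤ) ≤ Gq 0 := by
    intro k
    induction k with
    | zero => simp
    | succ m ih =>
      rw [Finset.sum_range_succ, mul_add]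
      have := hGqstep m
      linarith
  have hVsum : ∀ k : ℕ,
      F k + (2 * (1 - β) * (1 - c)) * ∑ j ∈ Finset.range k, ‖v (j + 1)‖ ^ 2 ≤ F 0 := by
    intro k
    induction k with
    | zero => simp
    | succ m ih =>
      rw [Finset.sum_range_succ, mul_add]
      have := hstepF m
      linarith
  set T : ℝ := 2 * γ * (Gq 0 / aa) + β * (F 0 / (2 * (1 - β) * (1 - c))) with hT
  have hT0 : 0 ≤ T := by
    rw [hT]
    have h1 : 0 ≤ Gq 0 / aa := div_nonneg (hGq0 0) haa.le
    have h2 : 0 ≤ F 0 / (2 * (1 - β) * (1 - c)) := div_nonneg (hF0 0) hε20.le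
    positivity
  have hsumF : ∀ k : ℕ, ∑ j ∈ Finset.range k, F (j + 1) ≤ T := by
    intro k
    have h1 : ∑ j ∈ Finset.range k, D (((j + 1 : ℕ)) : ℤ) ≤ Gq 0 / aa := by
      rw [le_div_iff₀ haa]
      have h2 := hDsum (k + 1)
      rw [Finset.sum_range_succ', mul_add] at h2
      have h3 := hGq0 (k + 1)
      have h4 := mul_nonneg haa.le (hD0 ((0 : ℕ) : ℤ))
      linarith
    have h2 : ∑ j ∈ Finset.range k, ‖v (j + 1)‖ ^ 2 ≤ F 0 / (2 * (1 - β) * (1 - c)) := by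
      rw [le_div_iff₀ hε20]
      have := hVsum k
      have := hF0 k
      linarith
    calc ∑ j ∈ Finset.range k, F (j + 1)
        = 2 * γ * ∑ j ∈ Finset.range k, D (((j + 1 : ℕ)) : ℤ)
          + β * ∑ j ∈ Finset.range k, ‖v (j + 1)‖ ^ 2 := by
          simp only [hF]
          rw [Finset.sum_add_distrib, ← Finset.mul_sum, ← Finset.mul_sum]
      _ ≤ T := by
          rw [hT]
          have h5 := mul_le_mul_of_nonneg_left h1 (by positivity : (0:ℝ) ≤ 2 * γ)
          have h6 := mul_le_mul_of_nonneg_left h2 hβ0.le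
          linarith
  refine ⟨T / (2 * γ) + 1, ?_, ?_⟩
  · have h1 : 0 ≤ T / (2 * γ) := div_nonneg hT0 (by positivity)
    linarith
  · intro k hk
    have hk0 : (0:ℝ) < (k : ℝ) := by exact_mod_cast Nat.pos_of_ne_zero (by omega)
    have hkF : (k : ℝ) * F k ≤ T := by
      calc (k : ℝ) * F k = ∑ _j ∈ Finset.range k, F k := by
            rw [Finset.sum_const, Finset.card_range, nsmul_eq_mul]
        _ ≤ ∑ j ∈ Finset.range k, F (j + 1) :=
            Finset.sum_le_sum fun j hj =>
              hFanti (Nat.succ_le_of_lt (Finset.mem_range.mp hj))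
        _ ≤ T := hsumF k
    have hFk : F k ≤ T / (k : ℝ) := by
      rw [le_div_iff₀ hk0, mul_comm]
      exact hkF
    have hDF : f (x (k : ℤ)) - f xstar ≤ F k / (2 * γ) := by
      have h5 : 2 * γ * (f (x (k : ℤ)) - f xstar) ≤ F k := by
        have h6 : F k = 2 * γ * D (k : ℤ) + β * ‖v k‖ ^ 2 := rfl
        have h7 : D (k : ℤ) = f (x (k : ℤ)) - f xstar := rfl
        rw [h6, h7]
        have := mul_nonneg hβ0.le (sq_nonneg ‖v k‖)
        linarith
      rw [le_div_iff₀ (by positivity : (0:ℝ) < 2 * γ), mul_comm]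
      exact h5
    have h8 : F k / (2 * γ) ≤ (T / (k : ℝ)) / (2 * γ) := by gcongr
    have h9 : (T / (k : ℝ)) / (2 * γ) = (T / (2 * γ)) / (k : ℝ) := by
      rw [div_div, div_div, mul_comm]
    have h10 : (T / (2 * γ)) / (k : ℝ) ≤ (T / (2 * γ) + 1) / (k : ℝ) := by
      gcongr
      linarith
    calc f (x (k : ℤ)) - f xstar ≤ F k / (2 * γ) := hDF
      _ ≤ (T / (k : ℝ)) / (2 * γ) := h8
      _ = (T / (2 * γ)) / (k : ℝ) := h9
      _ ≤ (T / (2 * γ) + 1) / (k : ℝ) := h10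
end
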